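/- arXiv:math/0405448 — 3 statements merged into one kernel-verified Lean document; each statement's English description precedes it below -/
import Mathlib

section
/- Let P ⊆ ℝ^d be a reflexive polytope and let v, w be distinct lattice points on the boundary of P. Then exactly one of the following three statements holds: (1) v ∼ w (v and w lie in a common facet of P); (2) v + w = 0; (3) v + w lies on the boundary of P. -/
open scoped BigOperators

noncomputable section

/-- The standard dot product on `ℝ^d`. -/
def dotProd {d : ℕ} (x y : Fin d → ℝ) : ℝ := ∑ i, x i * y i

/-- A point of `ℝ^d` is a lattice point (element of `ℤ^d`) if all coordinates are integers. -/
def IsLatticePoint {d : ℕ} (x : Fin d → ℝ) : Prop := ∀ i, ∃ n : ℤ, x i = (n : ℝ)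

/-- A lattice polytope is the convex hull of finitely many lattice points. -/
def IsLatticePolytope {d : ℕ} (P : Set (Fin d → ℝ)) : Prop :=
  ∃ V : Finset (Fin d → ℝ), (∀ v ∈ V, IsLatticePoint v) ∧ P = convexHull ℝ (V : Set (Fin d → ℝ))

/-- The dual polytope `P* = {y | ⟨x,y⟩ ≥ -1 ∀ x ∈ P}`. -/
def dualPolytope {d : ℕ} (P : Set (Fin d → ℝ)) : Set (Fin d → ℝ) :=
  {y | ∀ x ∈ P, -1 ≤ dotProd x y}

/-- A reflexive polytope: a full-dimensional lattice polytope with `0` in its interior whose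
dual polytope is again a lattice polytope. -/
def IsReflexive {d : ℕ} (P : Set (Fin d → ℝ)) : Prop :=
  IsLatticePolytope P ∧ (0 : Fin d → ℝ) ∈ interior P ∧ IsLatticePolytope (dualPolytope P)

/-- A face of `P`: the subset of `P` where some linear functional attains its maximum bound. -/
def IsFace {d : ℕ} (P F : Set (Fin d → ℝ)) : Prop :=
  ∃ (u : Fin d → ℝ) (c : ℝ), (∀ x ∈ P, dotProd u x ≤ c) ∧ F = {x ∈ P | dotProd u x = c}

/-- A facet of a `d`-dimensional polytope: a nonempty face of dimension `d - 1`. -/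
def IsFacet {d : ℕ} (P F : Set (Fin d → ℝ)) : Prop :=
  IsFace P F ∧ F.Nonempty ∧ Module.finrank ℝ (vectorSpan ℝ F) = d - 1

/-- `x ∼ y` : `x` and `y` lie in a common facet of `P`. -/
def SameFacet {d : ℕ} (P : Set (Fin d → ℝ)) (x y : Fin d → ℝ) : Prop :=
  ∃ F, IsFacet P F ∧ x ∈ F ∧ y ∈ F

/-- The star set of `x`: the union of all facets of `P` containing `x`. -/
def starSet {d : ℕ} (P : Set (Fin d → ℝ)) (x : Fin d → ℝ) : Set (Fin d → ℝ) :=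
  {y | SameFacet P x y}

/-- A family of lattice points forming a `ℤ`-basis of the lattice `ℤ^d`. -/
def IsZBasisFamily {d n : ℕ} (s : Fin n → (Fin d → ℝ)) : Prop :=
  LinearIndependent ℝ s ∧ (∀ i, IsLatticePoint (s i)) ∧
    ∀ z : Fin d → ℝ, IsLatticePoint z → ∃ c : Fin n → ℤ, z = ∑ i, (c i : ℝ) • s i

/-- A primitive lattice point: a nonzero lattice point such that no lattice point lies
strictly between `0` and it. -/
def IsPrimitivePoint {d : ℕ} (x : Fin d → ℝ) : Prop :=
  IsLatticePoint x ∧ x ≠ 0 ∧ ∀ y ∈ openSegment ℝ (0 : Fin d → ℝ) x, ¬ IsLatticePoint y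

/-- A Fano polytope: a full-dimensional lattice polytope with `0` in its interior all of whose
vertices are primitive lattice points. -/
def IsFanoPolytope {d : ℕ} (P : Set (Fin d → ℝ)) : Prop :=
  IsLatticePolytope P ∧ (0 : Fin d → ℝ) ∈ interior P ∧
    ∀ v ∈ Set.extremePoints ℝ P, IsPrimitivePoint v

/-- Canonical: the only interior lattice point is the origin. -/
def IsCanonicalPolytope {d : ℕ} (P : Set (Fin d → ℝ)) : Prop :=
  {x ∈ interior P | IsLatticePoint x} = {0}

/-- Terminal: the only lattice points of `P` are the origin and the vertices. -/
def IsTerminalPolytope {d : ℕ} (P : Set (Fin d → ℝ)) : Prop :=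
  {x ∈ P | IsLatticePoint x} = insert (0 : Fin d → ℝ) (Set.extremePoints ℝ P)

/-- Simplicial: every facet has exactly `d` vertices. -/
def IsSimplicial {d : ℕ} (P : Set (Fin d → ℝ)) : Prop :=
  ∀ F, IsFacet P F → (Set.extremePoints ℝ F).ncard = d

/-- Smooth: the vertices of every facet form a `ℤ`-basis of the lattice. -/
def IsSmoothPolytope {d : ℕ} (P : Set (Fin d → ℝ)) : Prop :=
  ∀ F, IsFacet P F → ∃ s : Fin d → (Fin d → ℝ),
    Set.extremePoints ℝ F = Set.range s ∧ IsZBasisFamily s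

/-- Semi-terminal: any two distinct vertices in a common facet are joined by a lattice-point
free segment. -/
def IsSemiTerminal {d : ℕ} (P : Set (Fin d → ℝ)) : Prop :=
  ∀ v ∈ Set.extremePoints ℝ P, ∀ w ∈ Set.extremePoints ℝ P, v ≠ w → SameFacet P v w →
    {x ∈ segment ℝ v w | IsLatticePoint x} = {v, w}

/-- The quotient space `ℝ^d / ℝv`. -/
abbrev QuotSpace {d : ℕ} (v : Fin d → ℝ) := (Fin d → ℝ) ⧸ (Submodule.span ℝ {v})

/-- The canonical projection `π_v : ℝ^d → ℝ^d/ℝv`. -/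
def projAlong {d : ℕ} (v : Fin d → ℝ) : (Fin d → ℝ) →ₗ[ℝ] QuotSpace v :=
  (Submodule.span ℝ {v}).mkQ

/-- The quotient lattice `ℤ^d/ℤv`, regarded as the image of `ℤ^d` in `ℝ^d/ℝv`. -/
def quotLattice {d : ℕ} (v : Fin d → ℝ) : Set (QuotSpace v) :=
  projAlong v '' {x | IsLatticePoint x}

/-- A primitive point of the quotient lattice `ℤ^d/ℤv`. -/
def QuotPrimitive {d : ℕ} (v : Fin d → ℝ) (q : QuotSpace v) : Prop :=
  q ∈ quotLattice v ∧ q ≠ 0 ∧ ∀ t ∈ openSegment ℝ (0 : QuotSpace v) q, t ∉ quotLattice v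

/-- A Fano polytope in the quotient space `ℝ^d/ℝv` with respect to the lattice `ℤ^d/ℤv`. -/
def QuotIsFanoPolytope {d : ℕ} (v : Fin d → ℝ) (Q : Set (QuotSpace v)) : Prop :=
  (∃ V : Finset (QuotSpace v), (∀ q ∈ V, q ∈ quotLattice v) ∧
      Q = convexHull ℝ (V : Set (QuotSpace v))) ∧
  (0 : QuotSpace v) ∈ interior Q ∧
  ∀ q ∈ Set.extremePoints ℝ Q, QuotPrimitive v q

/-- Unimodular equivalence: a real linear isomorphism mapping lattice onto lattice and one
polytope onto the other. -/
def LatticeEquivTo {d e : ℕ} (P : Set (Fin d → ℝ)) (Q : Set (Fin e → ℝ)) : Prop :=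
  ∃ f : (Fin d → ℝ) ≃ₗ[ℝ] (Fin e → ℝ),
    (∀ x, IsLatticePoint x ↔ IsLatticePoint (f x)) ∧ f '' P = Q

/-- The hexagon `Z₂ = conv(±(1,0), ±(0,1), ±(1,1)) ⊆ ℝ²`. -/
def Z2 : Set (Fin 2 → ℝ) :=
  convexHull ℝ ({![1,0], ![0,1], ![1,1], ![-1,0], ![0,-1], ![-1,-1]} : Set (Fin 2 → ℝ))

/-- The `j`-th coordinate pair of a point of `ℝ^{2m}`. -/
def pairCoords {m : ℕ} (x : Fin (2 * m) → ℝ) (j : Fin m) : Fin 2 → ℝ :=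
  fun i => x ⟨2 * (j : ℕ) + (i : ℕ), by have := j.isLt; have := i.isLt; omega⟩

/-- The `m`-fold product `Z₂ × ⋯ × Z₂ ⊆ ℝ^{2m}`. -/
def prodZ2 (m : ℕ) : Set (Fin (2 * m) → ℝ) := {x | ∀ j : Fin m, pairCoords x j ∈ Z2}

/-- The `j`-th coordinate pair of a point of `ℝ^{2m+1}` (first `2m` coordinates). -/
def pairCoords' {m : ℕ} (x : Fin (2 * m + 1) → ℝ) (j : Fin m) : Fin 2 → ℝ :=
  fun i => x ⟨2 * (j : ℕ) + (i : ℕ), by have := j.isLt; have := i.isLt; omega⟩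

/-- The product `[-1,1] × Z₂ × ⋯ × Z₂ ⊆ ℝ^{2m+1}` with `m` hexagon factors. -/
def boxProdZ2 (m : ℕ) : Set (Fin (2 * m + 1) → ℝ) :=
  {x | x ⟨2 * m, by omega⟩ ∈ Set.Icc (-1 : ℝ) 1 ∧ ∀ j : Fin m, pairCoords' x j ∈ Z2}


namespace PairAux

variable {d : ℕ}

lemma dot_comm (x y : Fin d → ℝ) : dotProd x y = dotProd y x :=
  Finset.sum_congr rfl fun i _ => mul_comm _ _

lemma dot_add_left (x y u : Fin d → ℝ) :
    dotProd (x + y) u = dotProd x u + dotProd y u := by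
  unfold dotProd
  rw [← Finset.sum_add_distrib]
  exact Finset.sum_congr rfl fun i _ => by simp [add_mul]

lemma dot_smul_left (c : ℝ) (x u : Fin d → ℝ) :
    dotProd (c • x) u = c * dotProd x u := by
  unfold dotProd
  rw [Finset.mul_sum]
  exact Finset.sum_congr rfl fun i _ => by simp [mul_assoc]

lemma dot_add_right (u x y : Fin d → ℝ) :
    dotProd u (x + y) = dotProd u x + dotProd u y := by
  rw [dot_comm, dot_add_left, dot_comm x u, dot_comm y u]

lemma dot_smul_right (c : ℝ) (u x : Fin d → ℝ) :
    dotProd u (c • x) = c * dotProd u x := by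
  rw [dot_comm, dot_smul_left, dot_comm]

lemma dot_neg_left (x u : Fin d → ℝ) : dotProd (-x) u = -dotProd x u := by
  have : -x = (-1 : ℝ) • x := by ext i; simp
  rw [this, dot_smul_left]; ring

lemma dot_zero_left (u : Fin d → ℝ) : dotProd 0 u = 0 := by
  unfold dotProd; simp

lemma dot_self_pos {u : Fin d → ℝ} (hu : u ≠ 0) : 0 < dotProd u u := by
  obtain ⟨i, hi⟩ : ∃ i, u i ≠ 0 := by
    by_contra h; push_neg at h; exact hu (funext h)
  exact Finset.sum_pos' (fun j _ => mul_self_nonneg _)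
    ⟨i, Finset.mem_univ i, mul_self_pos.2 hi⟩

lemma dot_cont (u : Fin d → ℝ) : Continuous fun x : Fin d → ℝ => dotProd x u := by
  unfold dotProd
  exact continuous_finset_sum _ fun i _ => (continuous_apply i).mul continuous_const

lemma dot_cont' (v : Fin d → ℝ) : Continuous fun u : Fin d → ℝ => dotProd v u := by
  have h : (fun u : Fin d → ℝ => dotProd v u) = fun u => dotProd u v := by
    funext u; exact dot_comm v u
  rw [h]; exact dot_cont v

/-- Converting a functional to a vector. -/
def toVec (f : (Fin d → ℝ) →ₗ[ℝ] ℝ) : Fin d → ℝ := fun i => f fun j => if i = j then 1 else 0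

lemma dot_toVec (f : (Fin d → ℝ) →ₗ[ℝ] ℝ) (x : Fin d → ℝ) :
    dotProd x (toVec f) = f x := by
  rw [LinearMap.pi_apply_eq_sum_univ f x]
  unfold dotProd toVec
  simp [smul_eq_mul]

/-- dotProd with fixed right argument as a linear map. -/
def dotLin (u : Fin d → ℝ) : (Fin d → ℝ) →ₗ[ℝ] ℝ where
  toFun x := dotProd x u
  map_add' x y := dot_add_left x y u
  map_smul' c x := by simp [dot_smul_left]

lemma isLinear_dot_right (v : Fin d → ℝ) : IsLinearMap ℝ (fun u : Fin d → ℝ => dotProd v u) :=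
  ⟨fun x y => dot_add_right v x y, fun c x => dot_smul_right c v x⟩

lemma isLinear_dot_left (u : Fin d → ℝ) : IsLinearMap ℝ (fun x : Fin d → ℝ => dotProd x u) :=
  ⟨fun x y => dot_add_left x y u, fun c x => dot_smul_left c x u⟩

lemma dot_int {x y : Fin d → ℝ} (hx : IsLatticePoint x) (hy : IsLatticePoint y) :
    ∃ n : ℤ, dotProd x y = n := by
  choose a ha using hx
  choose b hb using hy
  refine ⟨∑ i, a i * b i, ?_⟩
  unfold dotProd
  push_cast
  exact Finset.sum_congr rfl fun i _ => by rw [ha, hb]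

lemma mem_of_dual (P : Set (Fin d → ℝ)) (hconv : Convex ℝ P) (hclosed : IsClosed P)
    (h0 : (0 : Fin d → ℝ) ∈ P) (y : Fin d → ℝ)
    (hy : ∀ u ∈ dualPolytope P, -1 ≤ dotProd y u) : y ∈ P := by
  by_contra hyP
  obtain ⟨f, c, hfs, hcy⟩ := geometric_hahn_banach_closed_point hconv hclosed hyP
  have hc : 0 < c := by simpa using hfs 0 h0
  set u : Fin d → ℝ := (-c⁻¹) • toVec (f : (Fin d → ℝ) →ₗ[ℝ] ℝ) with hu
  have hux : ∀ x, dotProd x u = -(f x) / c := by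
    intro x
    rw [hu, dot_smul_right, dot_toVec]
    simp [div_eq_mul_inv, neg_mul, mul_comm]
  have hmem : u ∈ dualPolytope P := by
    intro x hx
    rw [hux, le_div_iff₀ hc]
    have := hfs x hx
    linarith
  have h2 := hy u hmem
  rw [hux, le_div_iff₀ hc] at h2
  linarith

lemma mem_interior_of_strict (P : Set (Fin d → ℝ)) (hconv : Convex ℝ P) (hclosed : IsClosed P)
    (h0 : (0 : Fin d → ℝ) ∈ P) (U : Finset (Fin d → ℝ))
    (hU : dualPolytope P = convexHull ℝ (U : Set (Fin d → ℝ)))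
    (x : Fin d → ℝ) (hx : ∀ u ∈ U, -1 < dotProd x u) : x ∈ interior P := by
  set G : Set (Fin d → ℝ) := ⋂ u ∈ U, {y | -1 < dotProd y u} with hG
  have hGopen : IsOpen G := by
    refine isOpen_biInter_finset fun u _ => ?_
    have h : {y : Fin d → ℝ | -1 < dotProd y u} = (fun y => dotProd y u) ⁻¹' Set.Ioi (-1) := rfl
    rw [h]
    exact isOpen_Ioi.preimage (dot_cont u)
  have hGP : G ⊆ P := by
    intro y hy
    refine mem_of_dual P hconv hclosed h0 y ?_
    intro u hu
    rw [hU] at hu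
    have hhalf : Convex ℝ {u : Fin d → ℝ | -1 ≤ dotProd y u} :=
      convex_halfSpace_ge (isLinear_dot_right y) (-1)
    have hsub : (U : Set (Fin d → ℝ)) ⊆ {u : Fin d → ℝ | -1 ≤ dotProd y u} := by
      intro u' hu'
      have h2 : -1 < dotProd y u' := Set.mem_iInter₂.1 hy u' hu'
      exact le_of_lt h2
    exact convexHull_min hsub hhalf hu
  exact mem_interior.2 ⟨G, hGP, hGopen, Set.mem_iInter₂.2 hx⟩

lemma exists_eq_neg_one (P : Set (Fin d → ℝ)) (hconv : Convex ℝ P) (hclosed : IsClosed P)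
    (h0 : (0 : Fin d → ℝ) ∈ P) (U : Finset (Fin d → ℝ))
    (hU : dualPolytope P = convexHull ℝ (U : Set (Fin d → ℝ)))
    (z : Fin d → ℝ) (hzP : z ∈ P) (hzni : z ∉ interior P) :
    ∃ u ∈ U, dotProd z u = -1 := by
  by_contra hcon
  push_neg at hcon
  refine hzni (mem_interior_of_strict P hconv hclosed h0 U hU z fun u hu => ?_)
  have hud : u ∈ dualPolytope P := by
    rw [hU]; exact subset_convexHull ℝ _ hu
  exact lt_of_le_of_ne (hud z hzP) (Ne.symm (hcon u hu))

/-- The key facet lemma: an extreme point of the dual polytope whose value `-1` is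
attained on `P` defines a facet of `P`. -/
lemma facet_of_extreme (V : Finset (Fin d → ℝ)) (P : Set (Fin d → ℝ))
    (hPV : P = convexHull ℝ (V : Set (Fin d → ℝ)))
    (us : Fin d → ℝ) (hext : us ∈ Set.extremePoints ℝ (dualPolytope P))
    (x₀ : Fin d → ℝ) (hx₀ : x₀ ∈ P) (hval : dotProd x₀ us = -1) :
    IsFacet P {x ∈ P | dotProd (-us) x = 1} := by
  classical
  replace hext := mem_extremePoints.1 hext
  have hdual : us ∈ dualPolytope P := hext.1
  have hge : ∀ x ∈ P, -1 ≤ dotProd x us := fun x hx => hdual x hx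
  set F : Set (Fin d → ℝ) := {x ∈ P | dotProd (-us) x = 1} with hF
  have hmemF : ∀ x, x ∈ F ↔ x ∈ P ∧ dotProd x us = -1 := by
    intro x
    constructor
    · rintro ⟨h1, h2⟩
      rw [dot_neg_left, dot_comm] at h2
      exact ⟨h1, by linarith⟩
    · rintro ⟨h1, h2⟩
      refine ⟨h1, ?_⟩
      rw [dot_neg_left, dot_comm, h2]; ring
  have hx₀F : x₀ ∈ F := (hmemF x₀).2 ⟨hx₀, hval⟩
  have hVne : V.Nonempty := by
    by_contra hVe
    rw [Finset.not_nonempty_iff_eq_empty] at hVe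
    rw [hVe] at hPV
    simp [convexHull_empty] at hPV
    rw [hPV] at hx₀
    exact hx₀
  set A : Finset (Fin d → ℝ) := V.filter (fun x => dotProd x us = -1) with hA
  have hVP : ∀ x ∈ V, x ∈ P := fun x hx => by
    rw [hPV]; exact subset_convexHull ℝ _ hx
  have hAspan : Submodule.span ℝ (A : Set (Fin d → ℝ)) = ⊤ := by
    by_contra hne
    obtain ⟨f, hf0, hfmap⟩ :=
      Submodule.exists_dual_map_eq_bot_of_lt_top (lt_top_iff_ne_top.2 hne) inferInstance
    set y := toVec f with hy
    have hfy : ∀ x, dotProd x y = f x := fun x => dot_toVec f x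
    have hy0 : y ≠ 0 := by
      intro h
      refine hf0 (LinearMap.ext fun x => ?_)
      have hx := hfy x
      rw [h] at hx
      have hz : dotProd x (0 : Fin d → ℝ) = 0 := by
        rw [dot_comm]; exact dot_zero_left x
      rw [LinearMap.zero_apply, ← hx, hz]
    have hyA : ∀ x ∈ A, dotProd x y = 0 := by
      intro x hx
      have hxs : f x ∈ (Submodule.span ℝ (A : Set (Fin d → ℝ))).map f :=
        Submodule.mem_map_of_mem (Submodule.subset_span hx)
      rw [hfmap] at hxs
      rw [hfy]
      simpa using hxs
    set g : (Fin d → ℝ) → ℝ :=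
      fun x => if dotProd x y = 0 then 1 else (dotProd x us + 1) / |dotProd x y| with hg
    have hgpos : ∀ x ∈ V, 0 < g x := by
      intro x hx
      rw [hg]
      by_cases hc : dotProd x y = 0
      · simp [hc]
      · have hxA : x ∉ A := fun hxA => hc (hyA x hxA)
        have hne1 : dotProd x us ≠ -1 := by
          intro h; exact hxA (Finset.mem_filter.2 ⟨hx, h⟩)
        have hge1 : -1 ≤ dotProd x us := hge x (hVP x hx)
        have hnum : 0 < dotProd x us + 1 := by
          rcases lt_or_eq_of_le hge1 with h | h
          · linarith
          · exact absurd h.symm hne1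
        simp only [hc, if_false]
        exact div_pos hnum (abs_pos.2 hc)
    set ε : ℝ := min 1 (V.inf' hVne g) with hε
    have hεpos : 0 < ε := by
      rw [hε]
      refine lt_min one_pos ?_
      rw [Finset.lt_inf'_iff]
      exact hgpos
    have hbound : ∀ x ∈ V, ε * |dotProd x y| ≤ dotProd x us + 1 := by
      intro x hx
      by_cases hc : dotProd x y = 0
      · rw [hc]
        simp only [abs_zero, mul_zero]
        have := hge x (hVP x hx)
        linarith
      · have hεle : ε ≤ g x := le_trans (min_le_right _ _) (Finset.inf'_le g hx)
        rw [hg] at hεle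
        simp only [hc, if_false] at hεle
        have habs : 0 < |dotProd x y| := abs_pos.2 hc
        rw [div_eq_mul_inv] at hεle
        calc ε * |dotProd x y| ≤ ((dotProd x us + 1) * |dotProd x y|⁻¹) * |dotProd x y| := by
              apply mul_le_mul_of_nonneg_right hεle (abs_nonneg _)
          _ = dotProd x us + 1 := by field_simp
    have hpert : ∀ s : ℝ, |s| = 1 → us + (s * ε) • y ∈ dualPolytope P := by
      intro s hs
      intro x hx
      rw [hPV] at hx
      have hhalf : Convex ℝ {x : Fin d → ℝ | -1 ≤ dotProd x (us + (s * ε) • y)} :=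
        convex_halfSpace_ge (isLinear_dot_left _) (-1)
      refine convexHull_min (fun x' hx' => ?_) hhalf hx
      have hx'V : x' ∈ V := hx'
      have h1 : dotProd x' (us + (s * ε) • y) = dotProd x' us + (s * ε) * dotProd x' y := by
        rw [dot_add_right, dot_smul_right]
      rw [Set.mem_setOf_eq, h1]
      have h2 : (s * ε) * dotProd x' y ≥ -(ε * |dotProd x' y|) := by
        have habs : |(s * ε) * dotProd x' y| = ε * |dotProd x' y| := by
          rw [abs_mul, abs_mul, hs, one_mul, abs_of_pos hεpos]
        linarith [neg_abs_le ((s * ε) * dotProd x' y)]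
      have h3 := hbound x' hx'V
      linarith
    have h1 : us + ε • y ∈ dualPolytope P := by
      have := hpert 1 (by norm_num)
      simpa using this
    have h2 : us + (-ε) • y ∈ dualPolytope P := by
      have := hpert (-1) (by norm_num)
      simpa using this
    have hseg : us ∈ openSegment ℝ (us + ε • y) (us + (-ε) • y) := by
      refine ⟨1/2, 1/2, by norm_num, by norm_num, by norm_num, ?_⟩
      module
    have heq := (hext.2 (us + ε • y) h1 (us + (-ε) • y) h2 hseg).1
    have hey : ε • y = 0 := by
      have h' := congrArg (fun z => z - us) heq
      simpa using h'
    rcases smul_eq_zero.1 hey with h | h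
    · exact absurd h (ne_of_gt hεpos)
    · exact hy0 h
  have hx₀ne : x₀ ≠ 0 := by
    intro h
    rw [h, dot_zero_left] at hval
    norm_num at hval
  set φ : (Fin d → ℝ) →ₗ[ℝ] ℝ := dotLin us with hφ
  have hupper : vectorSpan ℝ F ≤ LinearMap.ker φ := by
    rw [vectorSpan_def, Submodule.span_le]
    rintro z ⟨a, ha, b, hb, rfl⟩
    have ha' := ((hmemF a).1 ha).2
    have hb' := ((hmemF b).1 hb).2
    simp only [SetLike.mem_coe, LinearMap.mem_ker, vsub_eq_sub]
    show dotProd (a - b) us = 0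
    have h : a - b = a + (-b) := by ring
    rw [h, dot_add_left, dot_neg_left, ha', hb']
    ring
  have hφsurj : Function.Surjective φ := by
    intro r
    refine ⟨(-r) • x₀, ?_⟩
    show dotProd ((-r) • x₀) us = r
    rw [dot_smul_left, hval]; ring
  have hkerrank : Module.finrank ℝ (LinearMap.ker φ) = d - 1 := by
    have h1 := LinearMap.finrank_range_add_finrank_ker φ
    have h2 : LinearMap.range φ = ⊤ := LinearMap.range_eq_top.2 hφsurj
    rw [h2, finrank_top] at h1
    have h3 : Module.finrank ℝ (Fin d → ℝ) = d := Module.finrank_fin_fun ℝ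
    have h4 : Module.finrank ℝ ℝ = 1 := Module.finrank_self ℝ
    omega
  have hub : Module.finrank ℝ (vectorSpan ℝ F) ≤ d - 1 := by
    rw [← hkerrank]
    exact Submodule.finrank_mono hupper
  have hlb : d ≤ Module.finrank ℝ (vectorSpan ℝ F) + 1 := by
    have hAF : ∀ x ∈ A, x ∈ F := by
      intro x hx
      rw [hA, Finset.mem_filter] at hx
      exact (hmemF x).2 ⟨hVP x hx.1, hx.2⟩
    have htople : (⊤ : Submodule ℝ (Fin d → ℝ)) ≤ vectorSpan ℝ F ⊔ Submodule.span ℝ {x₀} := by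
      rw [← hAspan, Submodule.span_le]
      intro x hx
      have hxF : x ∈ F := hAF x hx
      have hsub : x - x₀ ∈ vectorSpan ℝ F := vsub_mem_vectorSpan ℝ hxF hx₀F
      have h : x = (x - x₀) + x₀ := by ring
      rw [h]
      exact Submodule.add_mem_sup hsub (Submodule.mem_span_singleton_self x₀)
    have h1 : Module.finrank ℝ (⊤ : Submodule ℝ (Fin d → ℝ)) ≤
        Module.finrank ℝ (vectorSpan ℝ F ⊔ Submodule.span ℝ {x₀} : Submodule ℝ (Fin d → ℝ)) :=
      Submodule.finrank_mono htople
    have h2 : Module.finrank ℝ (vectorSpan ℝ F ⊔ Submodule.span ℝ {x₀} : Submodule ℝ (Fin d → ℝ)) ≤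
        Module.finrank ℝ (vectorSpan ℝ F) + Module.finrank ℝ (Submodule.span ℝ {x₀}) :=
      Submodule.finrank_add_le_finrank_add_finrank _ _
    have h3 : Module.finrank ℝ (Submodule.span ℝ ({x₀} : Set (Fin d → ℝ))) = 1 :=
      finrank_span_singleton hx₀ne
    have h4 : Module.finrank ℝ (⊤ : Submodule ℝ (Fin d → ℝ)) = d := by
      rw [finrank_top]; exact Module.finrank_fin_fun ℝ
    omega
  refine ⟨⟨-us, 1, ?_, rfl⟩, ⟨x₀, hx₀F⟩, ?_⟩
  · intro x hx
    rw [dot_neg_left, dot_comm]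
    have := hge x hx
    linarith
  · have hd : 1 ≤ d := by
      rcases Nat.eq_zero_or_pos d with h | h
      · subst h
        exact absurd (Subsingleton.elim x₀ 0) hx₀ne
      · exact h
    omega

lemma sameFacet_of_double (V U : Finset (Fin d → ℝ)) (P : Set (Fin d → ℝ))
    (hPV : P = convexHull ℝ (V : Set (Fin d → ℝ)))
    (hPU : dualPolytope P = convexHull ℝ (U : Set (Fin d → ℝ)))
    (v w : Fin d → ℝ) (hvP : v ∈ P) (hwP : w ∈ P)
    (u₀ : Fin d → ℝ) (hu₀ : u₀ ∈ dualPolytope P)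
    (hv1 : dotProd v u₀ = -1) (hw1 : dotProd w u₀ = -1) : SameFacet P v w := by
  set S : Set (Fin d → ℝ) :=
    dualPolytope P ∩ {u | dotProd v u = -1} ∩ {u | dotProd w u = -1} with hS
  have hdcomp : IsCompact (dualPolytope P) := by
    rw [hPU]; exact U.finite_toSet.isCompact_convexHull ℝ
  have hdcl : IsClosed (dualPolytope P) := hdcomp.isClosed
  have hScl : IsClosed S :=
    (hdcl.inter (isClosed_eq (dot_cont' v) continuous_const)).inter
      (isClosed_eq (dot_cont' w) continuous_const)
  have hScomp : IsCompact S :=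
    hdcomp.of_isClosed_subset hScl (fun x hx => hx.1.1)
  have hSne : S.Nonempty := ⟨u₀, ⟨⟨hu₀, hv1⟩, hw1⟩⟩
  obtain ⟨us, hus⟩ := hScomp.extremePoints_nonempty hSne
  rw [mem_extremePoints] at hus
  have husdual : us ∈ dualPolytope P := hus.1.1.1
  have husv : dotProd v us = -1 := hus.1.1.2
  have husw : dotProd w us = -1 := hus.1.2
  have hext : us ∈ Set.extremePoints ℝ (dualPolytope P) := by
    rw [mem_extremePoints]
    refine ⟨husdual, fun x₁ h₁ x₂ h₂ hseg => ?_⟩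
    obtain ⟨a, b, ha, hb, hab, hsum⟩ := hseg
    have key : ∀ p q : ℝ, -1 ≤ p → -1 ≤ q → a * p + b * q = -1 → p = -1 ∧ q = -1 := by
      intro p q hp hq hpq
      constructor <;> nlinarith
    have hv₁ : dotProd v (a • x₁ + b • x₂) = a * dotProd v x₁ + b * dotProd v x₂ := by
      rw [dot_add_right, dot_smul_right, dot_smul_right]
    have hw₁ : dotProd w (a • x₁ + b • x₂) = a * dotProd w x₁ + b * dotProd w x₂ := by
      rw [dot_add_right, dot_smul_right, dot_smul_right]
    rw [hsum, husv] at hv₁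
    rw [hsum, husw] at hw₁
    have hkv := key _ _ (h₁ v hvP) (h₂ v hvP) hv₁.symm
    have hkw := key _ _ (h₁ w hwP) (h₂ w hwP) hw₁.symm
    have hx₁S : x₁ ∈ S := ⟨⟨h₁, hkv.1⟩, hkw.1⟩
    have hx₂S : x₂ ∈ S := ⟨⟨h₂, hkv.2⟩, hkw.2⟩
    exact hus.2 x₁ hx₁S x₂ hx₂S ⟨a, b, ha, hb, hab, hsum⟩
  have hfacet := facet_of_extreme V P hPV us hext v hvP husv
  refine ⟨_, hfacet, ?_, ?_⟩
  · exact ⟨hvP, by rw [dot_neg_left, dot_comm, husv]; ring⟩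
  · exact ⟨hwP, by rw [dot_neg_left, dot_comm, husw]; ring⟩

lemma not_mem_of_sameFacet (P : Set (Fin d → ℝ)) (h0 : (0 : Fin d → ℝ) ∈ interior P)
    (v w : Fin d → ℝ) (hne : v ≠ w) (hSF : SameFacet P v w) : v + w ∉ P := by
  intro hvwP
  obtain ⟨F, ⟨⟨u, c, hub, hFeq⟩, hFne, hdim⟩, hvF, hwF⟩ := hSF
  obtain ⟨ε, hεpos, hball⟩ := Metric.mem_nhds_iff.1 (mem_interior_iff_mem_nhds.1 h0)
  rw [hFeq] at hvF hwF
  have hvc : dotProd u v = c := hvF.2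
  have hwc : dotProd u w = c := hwF.2
  by_cases hu : u = 0
  · subst hu
    have hcz : c = 0 := by
      rw [dot_zero_left] at hvc
      linarith
    have hFP : F = P := by
      rw [hFeq, hcz]
      ext x
      simp [dot_zero_left]
    rw [hFP] at hdim
    have hvs : vectorSpan ℝ P = ⊤ := by
      refine eq_top_iff.2 ?_
      rw [← (Pi.basisFun ℝ (Fin d)).span_eq, Submodule.span_le]
      rintro z ⟨i, rfl⟩
      have hεne : (ε : ℝ) ≠ 0 := ne_of_gt hεpos
      have hmem : (ε / 2) • (Pi.basisFun ℝ (Fin d)) i ∈ P := by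
        apply hball
        rw [Metric.mem_ball, dist_zero_right, norm_smul, Real.norm_eq_abs]
        have h1 : ‖(Pi.basisFun ℝ (Fin d)) i‖ = 1 := by
          rw [Pi.basisFun_apply, Pi.norm_single]
          norm_num
        rw [h1, mul_one, abs_of_pos (by positivity)]
        linarith
      have h0P : (0 : Fin d → ℝ) ∈ P := interior_subset h0
      have hsub : (ε / 2) • (Pi.basisFun ℝ (Fin d)) i - 0 ∈ vectorSpan ℝ P :=
        vsub_mem_vectorSpan ℝ hmem h0P
      have h2 : (2 / ε) * (ε / 2) = 1 := by field_simp
      have h3 : (Pi.basisFun ℝ (Fin d)) i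
          = (2 / ε) • ((ε / 2) • (Pi.basisFun ℝ (Fin d)) i - 0) := by
        rw [sub_zero, smul_smul, h2, one_smul]
      rw [h3]
      exact Submodule.smul_mem _ _ hsub
    rw [hvs, finrank_top, Module.finrank_fin_fun] at hdim
    rcases Nat.eq_zero_or_pos d with hd | hd
    · subst hd; exact hne (Subsingleton.elim v w)
    · omega
  · have hcpos : 0 < c := by
      have hnu : 0 < ‖u‖ := norm_pos_iff.2 hu
      have huu : 0 < dotProd u u := dot_self_pos hu
      set x : Fin d → ℝ := (ε / (2 * ‖u‖)) • u with hx
      have hxP : x ∈ P := by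
        apply hball
        rw [Metric.mem_ball, dist_zero_right, hx, norm_smul, Real.norm_eq_abs]
        rw [abs_of_pos (by positivity)]
        have hval : ε / (2 * ‖u‖) * ‖u‖ = ε / 2 := by field_simp
        rw [hval]
        linarith
      have hux : dotProd u x = (ε / (2 * ‖u‖)) * dotProd u u := dot_smul_right _ u u
      have h1 : 0 < dotProd u x := by
        rw [hux]; positivity
      have h2 := hub x hxP
      linarith
    have h3 := hub (v + w) hvwP
    rw [dot_add_right, hvc, hwc] at h3
    linarith

end PairAux

/-- For distinct boundary lattice points `v, w` of a reflexive polytope, exactly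
one of the following holds: they lie in a common facet, `v + w = 0`, or `v + w ∈ ∂P`. -/
theorem pair_trichotomy {d : ℕ} (P : Set (Fin d → ℝ)) (hP : IsReflexive P)
    (v w : Fin d → ℝ) (hv : v ∈ frontier P) (hw : w ∈ frontier P)
    (hvL : IsLatticePoint v) (hwL : IsLatticePoint w) (hne : v ≠ w) :
    (SameFacet P v w ∨ v + w = 0 ∨ v + w ∈ frontier P) ∧
    ¬ (SameFacet P v w ∧ v + w = 0) ∧
    ¬ (SameFacet P v w ∧ v + w ∈ frontier P) ∧
    ¬ (v + w = 0 ∧ v + w ∈ frontier P) := by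
  classical
  obtain ⟨⟨V, hVlat, hPV⟩, h0int, ⟨U, hUlat, hPU⟩⟩ := hP
  have hPcompact : IsCompact P := by
    rw [hPV]; exact V.finite_toSet.isCompact_convexHull ℝ
  have hPclosed : IsClosed P := hPcompact.isClosed
  have hPconv : Convex ℝ P := by
    rw [hPV]; exact convex_convexHull ℝ _
  have h0P : (0 : Fin d → ℝ) ∈ P := interior_subset h0int
  have hfrsub : frontier P ⊆ P := fun x hx => by
    rw [← hPclosed.closure_eq]; exact frontier_subset_closure hx
  have hvP : v ∈ P := hfrsub hv
  have hwP : w ∈ P := hfrsub hw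
  have hEx1 : SameFacet P v w → v + w ∉ P :=
    PairAux.not_mem_of_sameFacet P h0int v w hne
  have key2 : ¬(SameFacet P v w ∧ v + w = 0) := by
    rintro ⟨hsf, hzero⟩
    exact hEx1 hsf (hzero ▸ h0P)
  have key3 : ¬(SameFacet P v w ∧ v + w ∈ frontier P) := by
    rintro ⟨hsf, hfr⟩
    exact hEx1 hsf (hfrsub hfr)
  have key4 : ¬(v + w = 0 ∧ v + w ∈ frontier P) := by
    rintro ⟨hzero, hfr⟩
    rw [hzero] at hfr
    exact hfr.2 h0int
  refine ⟨?_, key2, key3, key4⟩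
  by_cases hSF : SameFacet P v w
  · exact Or.inl hSF
  by_cases hzero : v + w = 0
  · exact Or.inr (Or.inl hzero)
  refine Or.inr (Or.inr ?_)
  set s : Fin d → ℝ := v + w with hs
  have hsne : s ≠ 0 := hzero
  have hsnorm : 0 < ‖s‖ := norm_pos_iff.2 hsne
  have hs_lat : IsLatticePoint s := by
    intro i
    obtain ⟨a, ha⟩ := hvL i
    obtain ⟨b, hb⟩ := hwL i
    refine ⟨a + b, ?_⟩
    show v i + w i = ((a + b : ℤ) : ℝ)
    rw [ha, hb]; push_cast; ring
  set T : Set ℝ := {t | 0 ≤ t ∧ t • s ∈ P} with hT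
  have hTne : T.Nonempty := ⟨0, le_refl 0, by rw [zero_smul]; exact h0P⟩
  obtain ⟨R, hR⟩ := hPcompact.isBounded.exists_norm_le
  have hTbdd : BddAbove T := by
    refine ⟨R / ‖s‖, fun t ht => ?_⟩
    have h1 : ‖t • s‖ ≤ R := hR _ ht.2
    rw [norm_smul, Real.norm_eq_abs, abs_of_nonneg ht.1] at h1
    rw [le_div_iff₀ hsnorm]
    exact h1
  have hTclosed : IsClosed T := by
    have h : T = Set.Ici (0 : ℝ) ∩ (fun t : ℝ => t • s) ⁻¹' P := by
      ext t
      simp only [hT, Set.mem_setOf_eq, Set.mem_inter_iff, Set.mem_Ici, Set.mem_preimage]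
    rw [h]
    exact isClosed_Ici.inter (hPclosed.preimage (continuous_id.smul continuous_const))
  set ts : ℝ := sSup T with hts
  have htT : ts ∈ T := hTclosed.csSup_mem hTne hTbdd
  have hhalfmem : (1/2 : ℝ) ∈ T := by
    refine ⟨by norm_num, ?_⟩
    have h := hPconv hvP hwP (by norm_num : (0:ℝ) ≤ 1/2) (by norm_num : (0:ℝ) ≤ 1/2)
      (by norm_num : (1/2 : ℝ) + 1/2 = 1)
    have h2 : (1/2 : ℝ) • s = (1/2 : ℝ) • v + (1/2 : ℝ) • w := by
      rw [hs]; module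
    rw [h2]
    exact h
  have htge : (1/2 : ℝ) ≤ ts := le_csSup hTbdd hhalfmem
  have htpos : 0 < ts := lt_of_lt_of_le (by norm_num) htge
  set z : Fin d → ℝ := ts • s with hz
  have hzP : z ∈ P := htT.2
  have hzni : z ∉ interior P := by
    intro hzint
    obtain ⟨ε, hεpos, hball⟩ := Metric.isOpen_iff.1 isOpen_interior z hzint
    set t' : ℝ := ts + ε / (2 * ‖s‖) with ht'
    have ht'T : t' ∈ T := by
      refine ⟨by positivity, ?_⟩
      have hmem : t' • s ∈ Metric.ball z ε := by
        rw [Metric.mem_ball, dist_eq_norm, hz, ← sub_smul, norm_smul, Real.norm_eq_abs]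
        have h1 : t' - ts = ε / (2 * ‖s‖) := by rw [ht']; ring
        rw [h1, abs_of_pos (by positivity)]
        have h2 : ε / (2 * ‖s‖) * ‖s‖ = ε / 2 := by field_simp
        rw [h2]
        linarith
      exact interior_subset (hball hmem)
    have hle := le_csSup hTbdd ht'T
    have hlt : ts < t' := by
      rw [ht']
      have : 0 < ε / (2 * ‖s‖) := by positivity
      linarith
    linarith
  obtain ⟨u₀, hu₀U, hu₀z⟩ :=
    PairAux.exists_eq_neg_one P hPconv hPclosed h0P U hPU z hzP hzni
  have hu₀dual : u₀ ∈ dualPolytope P := by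
    rw [hPU]; exact subset_convexHull ℝ _ hu₀U
  have hav : -1 ≤ dotProd v u₀ := hu₀dual v hvP
  have haw : -1 ≤ dotProd w u₀ := hu₀dual w hwP
  have hsplit : dotProd s u₀ = dotProd v u₀ + dotProd w u₀ := by
    rw [hs]; exact PairAux.dot_add_left v w u₀
  have hsum : ts * dotProd s u₀ = -1 := by
    rw [← PairAux.dot_smul_left, ← hz, hu₀z]
  obtain ⟨n, hn⟩ := PairAux.dot_int hs_lat (hUlat u₀ hu₀U)
  have hsum' : ts * (n : ℝ) = -1 := by rw [← hn]; exact hsum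
  have hnneg : (n : ℝ) < 0 := by nlinarith
  have hnge : (-2 : ℝ) ≤ (n : ℝ) := by nlinarith
  have hn12 : n = -1 ∨ n = -2 := by
    have h1 : n < 0 := by exact_mod_cast hnneg
    have h2 : (-2 : ℤ) ≤ n := by exact_mod_cast hnge
    omega
  rcases hn12 with h | h
  · have hts1 : ts = 1 := by
      rw [h] at hsum'
      push_cast at hsum'
      linarith
    have hzs : z = s := by rw [hz, hts1, one_smul]
    show s ∈ frontier P
    rw [hzs] at hzP hzni
    exact ⟨subset_closure hzP, hzni⟩
  · have hvw1 : dotProd v u₀ = -1 ∧ dotProd w u₀ = -1 := by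
      have hsn : dotProd v u₀ + dotProd w u₀ = -2 := by
        rw [← hsplit, hn, h]; norm_num
      constructor <;> linarith
    exact absurd
      (PairAux.sameFacet_of_double V U P hPV hPU v w hvP hwP u₀ hu₀dual hvw1.1 hvw1.2) hSF

end
end

section
/- Let P ⊆ ℝ^d be a reflexive polytope and let v, w be distinct lattice points on the boundary of P with v ≁ w (not in a common facet) and v + w ≠ 0, so that v + w ∈ ∂P. Then {v, w} is a ℤ-basis of the lattice span(v,w) ∩ ℤ^d, and there exists exactly one pair (a, b) of positive integers such that z := a·v + b·w lies on the boundary of P with v ∼ z and w ∼ z. Moreover a = 1 or b = 1, a equals the number of lattice points on the segment [w, z] minus one, b equals the number of lattice points on the segment [v, z] minus one, and every facet of P containing z contains exactly one of the points v or w. -/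
open scoped BigOperators

noncomputable section

namespace GPR

variable {d : ℕ}

lemma dot_comm (x y : Fin d → ℝ) : dotProd x y = dotProd y x := by
  unfold dotProd; exact Finset.sum_congr rfl fun i _ => mul_comm _ _

lemma dot_isLinearMap_left (u : Fin d → ℝ) : IsLinearMap ℝ (fun x => dotProd x u) := by
  constructor
  · intro x y; unfold dotProd; rw [← Finset.sum_add_distrib]
    exact Finset.sum_congr rfl fun i _ => by simp [add_mul]
  · intro c x; unfold dotProd
    rw [smul_eq_mul, Finset.mul_sum]
    exact Finset.sum_congr rfl fun i _ => by simp [mul_assoc]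

/-- dot as a linear map in the first argument. -/
def dlin (u : Fin d → ℝ) : (Fin d → ℝ) →ₗ[ℝ] ℝ := (dot_isLinearMap_left u).mk' _

@[simp] lemma dlin_apply (u x : Fin d → ℝ) : dlin u x = dotProd x u := rfl

lemma dot_add_left (x y u : Fin d → ℝ) : dotProd (x + y) u = dotProd x u + dotProd y u :=
  (dot_isLinearMap_left u).map_add x y

lemma dot_smul_left (c : ℝ) (x u : Fin d → ℝ) : dotProd (c • x) u = c * dotProd x u :=
  (dot_isLinearMap_left u).map_smul c x

lemma dot_neg_left (x u : Fin d → ℝ) : dotProd (-x) u = -dotProd x u := by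
  have := dot_smul_left (-1) x u; simpa using this

lemma dot_zero_left (u : Fin d → ℝ) : dotProd 0 u = 0 := by
  unfold dotProd; simp

lemma dot_add_right (x u v' : Fin d → ℝ) : dotProd x (u + v') = dotProd x u + dotProd x v' := by
  rw [dot_comm, dot_add_left, dot_comm u x, dot_comm v' x]

lemma dot_smul_right (c : ℝ) (x u : Fin d → ℝ) : dotProd x (c • u) = c * dotProd x u := by
  rw [dot_comm, dot_smul_left, dot_comm]

lemma dot_sub_right (x u v' : Fin d → ℝ) : dotProd x (u - v') = dotProd x u - dotProd x v' := by
  have h : u - v' = u + (-1 : ℝ) • v' := by simp [sub_eq_add_neg]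
  rw [h, dot_add_right, dot_smul_right]; ring

lemma dot_self_pos {x : Fin d → ℝ} (hx : x ≠ 0) : 0 < dotProd x x := by
  have h : ∃ i, x i ≠ 0 := by
    by_contra h; push_neg at h; exact hx (funext fun i => h i)
  obtain ⟨i, hi⟩ := h
  unfold dotProd
  apply Finset.sum_pos' (fun j _ => mul_self_nonneg _)
  refine ⟨i, Finset.mem_univ i, ?_⟩
  rcases lt_or_gt_of_ne hi with h | h
  · exact mul_pos_of_neg_of_neg h h
  · exact mul_pos h h

lemma dot_eval_basis (f : (Fin d → ℝ) →L[ℝ] ℝ) (x : Fin d → ℝ) :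
    f x = dotProd x (fun i => f (Pi.single i 1)) := by
  have hx : x = ∑ i, x i • (Pi.single i (1:ℝ) : Fin d → ℝ) := by
    funext j
    rw [Finset.sum_apply]
    simp [Pi.single_apply]
  conv_lhs => rw [hx]
  rw [map_sum]
  unfold dotProd
  exact Finset.sum_congr rfl fun i _ => by simp

lemma continuous_dot_left (u : Fin d → ℝ) : Continuous (fun x => dotProd x u) :=
  (dlin u).continuous_of_finiteDimensional

/-- lattice point lemmas -/
lemma lattice_add {x y : Fin d → ℝ} (hx : IsLatticePoint x) (hy : IsLatticePoint y) :
    IsLatticePoint (x + y) := by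
  intro i; obtain ⟨m, hm⟩ := hx i; obtain ⟨n, hn⟩ := hy i
  exact ⟨m + n, by push_cast [Pi.add_apply, hm, hn]; ring⟩

lemma lattice_neg {x : Fin d → ℝ} (hx : IsLatticePoint x) : IsLatticePoint (-x) := by
  intro i; obtain ⟨m, hm⟩ := hx i; exact ⟨-m, by push_cast [Pi.neg_apply, hm]; ring⟩

lemma lattice_zsmul {x : Fin d → ℝ} (hx : IsLatticePoint x) (c : ℤ) :
    IsLatticePoint ((c:ℝ) • x) := by
  intro i; obtain ⟨m, hm⟩ := hx i; exact ⟨c * m, by push_cast [Pi.smul_apply, hm]; simp⟩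

lemma lattice_nsmul {x : Fin d → ℝ} (hx : IsLatticePoint x) (c : ℕ) :
    IsLatticePoint ((c:ℝ) • x) := by
  have := lattice_zsmul hx (c:ℤ); simpa using this

lemma dot_int {x y : Fin d → ℝ} (hx : IsLatticePoint x) (hy : IsLatticePoint y) :
    ∃ k : ℤ, dotProd x y = (k:ℝ) := by
  unfold dotProd
  have : ∀ i : Fin d, ∃ k : ℤ, x i * y i = (k:ℝ) := by
    intro i; obtain ⟨m, hm⟩ := hx i; obtain ⟨n, hn⟩ := hy i
    exact ⟨m * n, by push_cast [hm, hn]; ring⟩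
  choose k hk using this
  exact ⟨∑ i, k i, by rw [Finset.sum_congr rfl fun i _ => hk i]; push_cast; ring⟩

end GPR
namespace GPR

variable {d : ℕ} {P : Set (Fin d → ℝ)}

lemma dot_isLinearMap_right (x : Fin d → ℝ) : IsLinearMap ℝ (fun y => dotProd x y) := by
  constructor
  · intro a b; rw [dot_comm, dot_add_left, dot_comm a x, dot_comm b x]
  · intro c a; simp only [smul_eq_mul]; rw [dot_comm, dot_smul_left, dot_comm]

lemma P_convex (hP : IsReflexive P) : Convex ℝ P := by
  obtain ⟨V, _, hPeq⟩ := hP.1; rw [hPeq]; exact convex_convexHull ℝ _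

lemma P_compact (hP : IsReflexive P) : IsCompact P := by
  obtain ⟨V, _, hPeq⟩ := hP.1; rw [hPeq]; exact V.finite_toSet.isCompact_convexHull ℝ

lemma P_closed (hP : IsReflexive P) : IsClosed P := (P_compact hP).isClosed

lemma zero_mem_P (hP : IsReflexive P) : (0 : Fin d → ℝ) ∈ P := interior_subset hP.2.1

lemma dual_compact (hP : IsReflexive P) : IsCompact (dualPolytope P) := by
  obtain ⟨V, _, hPeq⟩ := hP.2.2; rw [hPeq]; exact V.finite_toSet.isCompact_convexHull ℝ

lemma dual_convex (hP : IsReflexive P) : Convex ℝ (dualPolytope P) := by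
  obtain ⟨V, _, hPeq⟩ := hP.2.2; rw [hPeq]; exact convex_convexHull ℝ _

lemma E_finite (hP : IsReflexive P) : (Set.extremePoints ℝ (dualPolytope P)).Finite := by
  obtain ⟨V, _, hPeq⟩ := hP.2.2
  apply V.finite_toSet.subset
  rw [hPeq]
  exact extremePoints_convexHull_subset

lemma E_lattice (hP : IsReflexive P) :
    ∀ u ∈ Set.extremePoints ℝ (dualPolytope P), IsLatticePoint u := by
  obtain ⟨V, hVlat, hPeq⟩ := hP.2.2
  intro u hu
  apply hVlat
  have : u ∈ (V : Set (Fin d → ℝ)) := by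
    rw [hPeq] at hu; exact extremePoints_convexHull_subset hu
  exact_mod_cast this

lemma E_sub_dual : Set.extremePoints ℝ (dualPolytope P) ⊆ dualPolytope P :=
  extremePoints_subset

lemma dual_eq (hP : IsReflexive P) :
    dualPolytope P = convexHull ℝ (Set.extremePoints ℝ (dualPolytope P)) := by
  have h1 := closure_convexHull_extremePoints (dual_compact hP) (dual_convex hP)
  have h2 : IsClosed (convexHull ℝ (Set.extremePoints ℝ (dualPolytope P))) :=
    ((E_finite hP).isCompact_convexHull ℝ).isClosed
  have h3 := h2.closure_eq
  rw [h1] at h3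
  exact h3

lemma mem_P_iff (hP : IsReflexive P) (x : Fin d → ℝ) :
    x ∈ P ↔ ∀ u ∈ Set.extremePoints ℝ (dualPolytope P), -1 ≤ dotProd x u := by
  constructor
  · intro hx u hu; exact E_sub_dual hu x hx
  · intro hx
    by_contra hxP
    obtain ⟨f, c, hfs, hcx⟩ :=
      geometric_hahn_banach_closed_point (P_convex hP) (P_closed hP) hxP
    have hc0 : 0 < c := by have := hfs 0 (zero_mem_P hP); simpa using this
    set y : Fin d → ℝ := (-(c⁻¹)) • (fun i => f (Pi.single i 1)) with hy
    have hdot : ∀ a : Fin d → ℝ, dotProd a y = -(c⁻¹) * f a := by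
      intro a; rw [hy, dot_smul_right, ← dot_eval_basis]
    have hyD : y ∈ dualPolytope P := by
      intro a ha
      rw [hdot]
      have := (hfs a ha).le
      have h2 : c⁻¹ * f a ≤ 1 := by
        rw [← div_eq_inv_mul]; exact (div_le_one hc0).2 this
      nlinarith
    have hxy : dotProd x y < -1 := by
      rw [hdot]
      have h2 : (1:ℝ) < c⁻¹ * f x := by
        rw [← div_eq_inv_mul]; exact (one_lt_div hc0).2 hcx
      nlinarith
    have hconv : dualPolytope P ⊆ {y' | -1 ≤ dotProd x y'} := by
      rw [dual_eq hP]
      apply convexHull_min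
      · intro u hu; exact hx u hu
      · exact convex_halfSpace_ge (dot_isLinearMap_right x) (-1)
    exact absurd (hconv hyD) (not_le.2 hxy)

lemma frontier_sub_P (hP : IsReflexive P) : frontier P ⊆ P := by
  intro x hx
  have := frontier_subset_closure (s := P) hx
  rwa [(P_closed hP).closure_eq] at this

lemma not_interior_of_frontier {x : Fin d → ℝ} (hx : x ∈ frontier P) : x ∉ interior P := by
  rw [frontier] at hx; exact hx.2

lemma frontier_normal (hP : IsReflexive P) {x : Fin d → ℝ} (hx : x ∈ frontier P) :
    ∃ u ∈ Set.extremePoints ℝ (dualPolytope P), dotProd x u = -1 := by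
  have hxP : x ∈ P := frontier_sub_P hP hx
  have hxI : x ∉ interior P := not_interior_of_frontier hx
  obtain ⟨f, hfs⟩ :=
    geometric_hahn_banach_open_point (Convex.interior (P_convex hP)) isOpen_interior hxI
  have hfx0 : 0 < f x := by have := hfs 0 hP.2.1; simpa using this
  have hfP : ∀ a ∈ P, f a ≤ f x := by
    intro a ha
    by_contra hlt
    push_neg at hlt
    have hfa0 : 0 < f a := lt_trans hfx0 hlt
    set t : ℝ := f x / f a with ht
    have ht0 : 0 < t := div_pos hfx0 hfa0
    have ht1 : t < 1 := (div_lt_one hfa0).2 hlt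
    have hmem : (1 - t) • (0 : Fin d → ℝ) + t • a ∈ interior P :=
      (P_convex hP).combo_interior_closure_mem_interior hP.2.1 (subset_closure ha)
        (by linarith) ht0.le (by ring)
    have := hfs _ hmem
    simp only [map_add, map_smul, map_zero, smul_eq_mul, mul_zero, zero_add] at this
    rw [ht, div_mul_cancel₀ _ (ne_of_gt hfa0)] at this
    exact lt_irrefl _ this
  set y : Fin d → ℝ := (-(f x)⁻¹) • (fun i => f (Pi.single i 1)) with hy
  have hdot : ∀ a : Fin d → ℝ, dotProd a y = -(f x)⁻¹ * f a := by
    intro a; rw [hy, dot_smul_right, ← dot_eval_basis]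
  have hyD : y ∈ dualPolytope P := by
    intro a ha
    rw [hdot]
    have h2 : (f x)⁻¹ * f a ≤ 1 := by
      rw [← div_eq_inv_mul]; exact (div_le_one hfx0).2 (hfP a ha)
    nlinarith
  have hxy : dotProd x y = -1 := by
    rw [hdot]; field_simp
  by_contra hcon
  push_neg at hcon
  have hgt : ∀ u ∈ Set.extremePoints ℝ (dualPolytope P), -1 < dotProd x u := by
    intro u hu
    exact lt_of_le_of_ne (E_sub_dual hu x hxP) (Ne.symm (hcon u hu))
  set T := (E_finite hP).toFinset with hT
  have hyE : y ∈ convexHull ℝ (Set.extremePoints ℝ (dualPolytope P)) := by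
    rw [← dual_eq hP]; exact hyD
  have hTne : T.Nonempty := by
    rcases Set.eq_empty_or_nonempty (Set.extremePoints ℝ (dualPolytope P)) with he | he
    · rw [he] at hyE; simp at hyE
    · obtain ⟨u, hu⟩ := he
      exact ⟨u, by rw [hT, Set.Finite.mem_toFinset]; exact hu⟩
  have hmgt : -1 < T.inf' hTne (fun u => dotProd x u) := by
    rw [Finset.lt_inf'_iff]
    intro u hu
    exact hgt u ((Set.Finite.mem_toFinset _).1 hu)
  have hconv : convexHull ℝ (Set.extremePoints ℝ (dualPolytope P)) ⊆
      {y' | T.inf' hTne (fun u => dotProd x u) ≤ dotProd x y'} := by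
    apply convexHull_min
    · intro u hu
      show T.inf' hTne (fun u => dotProd x u) ≤ dotProd x u
      exact Finset.inf'_le _ ((Set.Finite.mem_toFinset _).2 hu)
    · exact convex_halfSpace_ge (dot_isLinearMap_right x) _
  have := hconv hyE
  simp only [Set.mem_setOf_eq] at this
  rw [hxy] at this
  linarith

lemma ball_subset_dual (hP : IsReflexive P) :
    ∃ r : ℝ, 0 < r ∧ ∀ y : Fin d → ℝ, ‖y‖ ≤ r → y ∈ dualPolytope P := by
  obtain ⟨C, hC⟩ := (isBounded_iff_forall_norm_le).1 (P_compact hP).isBounded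
  set R : ℝ := max C 1 with hR
  have hR1 : (1:ℝ) ≤ R := le_max_right _ _
  have hR0 : (0:ℝ) < R := lt_of_lt_of_le one_pos hR1
  refine ⟨((d:ℝ) * R + 1)⁻¹, by positivity, ?_⟩
  intro y hyr x hx
  have hbound : |dotProd x y| ≤ (d:ℝ) * R * ‖y‖ := by
    unfold dotProd
    calc |∑ i, x i * y i| ≤ ∑ i, |x i * y i| := Finset.abs_sum_le_sum_abs _ _
      _ ≤ ∑ _i : Fin d, R * ‖y‖ := by
          apply Finset.sum_le_sum
          intro i _
          rw [abs_mul]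
          have h1 : |x i| ≤ R := by
            have := norm_le_pi_norm x i
            rw [Real.norm_eq_abs] at this
            exact le_trans this (le_trans (hC x hx) (le_max_left _ _))
          have h2 : |y i| ≤ ‖y‖ := by
            have := norm_le_pi_norm y i
            rwa [Real.norm_eq_abs] at this
          have h3 : (0:ℝ) ≤ |y i| := abs_nonneg _
          nlinarith [abs_nonneg (x i), norm_nonneg y]
      _ = (d:ℝ) * R * ‖y‖ := by rw [Finset.sum_const]; simp [Finset.card_univ]; ring
  have hfin : |dotProd x y| ≤ 1 := by
    have h4 : (d:ℝ) * R * ‖y‖ ≤ (d:ℝ) * R * ((d:ℝ) * R + 1)⁻¹ := by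
      apply mul_le_mul_of_nonneg_left hyr (by positivity)
    have h5 : (d:ℝ) * R * ((d:ℝ) * R + 1)⁻¹ ≤ 1 := by
      rw [← div_eq_mul_inv, div_le_one (by positivity)]
      linarith
    linarith
  have := abs_le.1 hfin
  linarith [this.1]

lemma interior_lattice (hP : IsReflexive P) {z : Fin d → ℝ} (hz : z ∈ interior P)
    (hzl : IsLatticePoint z) : z = 0 := by
  by_contra hz0
  obtain ⟨r, hr0, hball⟩ := ball_subset_dual hP
  have hzn : (0:ℝ) < ‖z‖ := norm_pos_iff.2 hz0
  set y : Fin d → ℝ := (-(r / ‖z‖)) • z with hy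
  have hyD : y ∈ dualPolytope P := by
    apply hball
    rw [hy, norm_smul]
    simp only [norm_neg, Real.norm_eq_abs]
    rw [abs_of_pos (div_pos hr0 hzn), div_mul_cancel₀ _ (ne_of_gt hzn)]
  have hzy : dotProd z y < 0 := by
    rw [hy, dot_smul_right]
    have := dot_self_pos hz0
    have h2 : (0:ℝ) < r / ‖z‖ := div_pos hr0 hzn
    nlinarith
  -- get extreme lattice normal with negative dot
  have hEneg : ∃ u ∈ Set.extremePoints ℝ (dualPolytope P), dotProd z u < 0 := by
    by_contra hcon
    push_neg at hcon
    have hconv : dualPolytope P ⊆ {y' | 0 ≤ dotProd z y'} := by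
      rw [dual_eq hP]
      apply convexHull_min
      · intro u hu; exact hcon u hu
      · exact convex_halfSpace_ge (dot_isLinearMap_right z) 0
    exact absurd (hconv hyD) (not_le.2 hzy)
  obtain ⟨u, huE, huneg⟩ := hEneg
  obtain ⟨k, hk⟩ := dot_int hzl (E_lattice hP u huE)
  have hklt : (k:ℝ) < 0 := by rw [← hk]; exact huneg
  have hkint : k < 0 := by exact_mod_cast hklt
  have hkneg : (k:ℝ) ≤ -1 := by
    have : k ≤ -1 := by omega
    exact_mod_cast this
  -- stretch z slightly
  have hcont : Continuous (fun t : ℝ => t • z) := by continuity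
  have hopen : IsOpen ((fun t : ℝ => t • z) ⁻¹' interior P) := isOpen_interior.preimage hcont
  have h1mem : (1:ℝ) ∈ (fun t : ℝ => t • z) ⁻¹' interior P := by
    simp only [Set.mem_preimage, one_smul]; exact hz
  obtain ⟨ε, hε0, hεball⟩ := Metric.isOpen_iff.1 hopen 1 h1mem
  have htmem : (1 + ε/2) • z ∈ interior P := by
    apply hεball
    rw [Metric.mem_ball, Real.dist_eq]
    rw [abs_of_pos (by linarith)]
    linarith
  have htP : (1 + ε/2) • z ∈ P := interior_subset htmem
  have := E_sub_dual huE _ htP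
  rw [dot_smul_left, hk] at this
  nlinarith

end GPR
namespace GPR

variable {d : ℕ} {P : Set (Fin d → ℝ)}

lemma exists_perp {F : Set (Fin d → ℝ)}
    (h : Module.finrank ℝ (Submodule.span ℝ F) < d) :
    ∃ y : Fin d → ℝ, y ≠ 0 ∧ ∀ x ∈ F, dotProd x y = 0 := by
  set W := Submodule.span ℝ F with hW
  let ψ : (Fin d → ℝ) →ₗ[ℝ] (W →ₗ[ℝ] ℝ) :=
    { toFun := fun y => (dlin y).comp W.subtype
      map_add' := by
        intro a b; ext x; simp [dot_add_right]
      map_smul' := by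
        intro c a; ext x; simp [dot_smul_right] }
  have hnotinj : ¬ Function.Injective ψ := by
    intro hinj
    have h1 := LinearMap.finrank_le_finrank_of_injective hinj
    rw [Module.finrank_linearMap, Module.finrank_self, mul_one, Module.finrank_fin_fun] at h1
    omega
  rw [← LinearMap.ker_eq_bot] at hnotinj
  obtain ⟨y, hyker, hy0⟩ := (Submodule.ne_bot_iff _).1 hnotinj
  refine ⟨y, hy0, ?_⟩
  intro x hx
  have := LinearMap.congr_fun hyker ⟨x, Submodule.subset_span hx⟩
  simpa [ψ, dot_comm] using this

lemma span_le_bound {F : Set (Fin d → ℝ)} (hne : F.Nonempty) :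
    Module.finrank ℝ (Submodule.span ℝ F) ≤ Module.finrank ℝ (vectorSpan ℝ F) + 1 := by
  obtain ⟨x₀, hx₀⟩ := hne
  have hle : Submodule.span ℝ F ≤ vectorSpan ℝ F ⊔ Submodule.span ℝ {x₀} := by
    rw [Submodule.span_le]
    intro x hx
    have h1 : x - x₀ ∈ vectorSpan ℝ F := by
      have := vsub_mem_vectorSpan ℝ hx hx₀
      rwa [vsub_eq_sub] at this
    have h2 : x₀ ∈ Submodule.span ℝ ({x₀} : Set (Fin d → ℝ)) :=
      Submodule.mem_span_singleton_self x₀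
    have := Submodule.add_mem_sup h1 h2
    simpa using this
  calc Module.finrank ℝ (Submodule.span ℝ F)
      ≤ Module.finrank ℝ ↥(vectorSpan ℝ F ⊔ Submodule.span ℝ {x₀}) :=
        Submodule.finrank_mono hle
    _ ≤ Module.finrank ℝ (vectorSpan ℝ F) + Module.finrank ℝ (Submodule.span ℝ {x₀}) := by
        have := Submodule.finrank_sup_add_finrank_inf_eq (vectorSpan ℝ F)
          (Submodule.span ℝ ({x₀} : Set (Fin d → ℝ)))
        omega
    _ ≤ Module.finrank ℝ (vectorSpan ℝ F) + 1 := by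
        have : Module.finrank ℝ (Submodule.span ℝ ({x₀} : Set (Fin d → ℝ))) ≤ 1 := by
          rcases eq_or_ne x₀ 0 with h | h
          · rw [h, Submodule.span_zero_singleton]
            rw [finrank_bot ℝ (Fin d → ℝ)]
            omega
          · rw [finrank_span_singleton h]
        omega

lemma vectorSpan_P_top (hP0 : (0 : Fin d → ℝ) ∈ interior P) : vectorSpan ℝ P = ⊤ := by
  obtain ⟨ε, hε0, hball⟩ := Metric.mem_nhds_iff.1 (mem_interior_iff_mem_nhds.1 hP0)
  rw [eq_top_iff]
  intro z _
  rcases eq_or_ne z 0 with hz | hz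
  · rw [hz]; exact Submodule.zero_mem _
  · have hzn : (0:ℝ) < ‖z‖ := norm_pos_iff.2 hz
    set c : ℝ := (ε/2) / ‖z‖ with hc
    have hc0 : 0 < c := by positivity
    have h1 : c • z ∈ P := by
      apply hball
      rw [Metric.mem_ball, dist_zero_right, norm_smul, Real.norm_eq_abs,
        abs_of_pos hc0, hc, div_mul_cancel₀ _ (ne_of_gt hzn)]
      linarith
    have h0 : (0 : Fin d → ℝ) ∈ P := hball (by simp [Metric.mem_ball, hε0])
    have h2 : c • z - 0 ∈ vectorSpan ℝ P := by
      have := vsub_mem_vectorSpan ℝ h1 h0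
      rwa [vsub_eq_sub] at this
    rw [sub_zero] at h2
    have h3 := Submodule.smul_mem _ c⁻¹ h2
    rwa [smul_smul, inv_mul_cancel₀ (ne_of_gt hc0), one_smul] at h3

lemma finrank_ker_dlin {u : Fin d → ℝ} (hu : u ≠ 0) :
    Module.finrank ℝ (LinearMap.ker (dlin u)) = d - 1 := by
  have h1 := LinearMap.finrank_range_add_finrank_ker (dlin u)
  rw [Module.finrank_fin_fun] at h1
  have h2 : Module.finrank ℝ (LinearMap.range (dlin u)) = 1 := by
    have hle : Module.finrank ℝ (LinearMap.range (dlin u)) ≤ 1 := by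
      have := Submodule.finrank_le (LinearMap.range (dlin u))
      rwa [Module.finrank_self] at this
    have hne : LinearMap.range (dlin u) ≠ ⊥ := by
      intro hbot
      have : dlin u u = 0 := by
        have : dlin u u ∈ LinearMap.range (dlin u) := LinearMap.mem_range_self _ u
        rw [hbot] at this
        simpa using this
      rw [dlin_apply] at this
      exact absurd this (ne_of_gt (dot_self_pos hu))
    have hne0 : Module.finrank ℝ (LinearMap.range (dlin u)) ≠ 0 := by
      intro h0
      exact hne ((Submodule.finrank_eq_zero).1 h0)
    omega
  omega

lemma mem_dual_iff_forall (hP : IsReflexive P) {y : Fin d → ℝ} :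
    y ∈ dualPolytope P ↔ ∀ x ∈ P, -1 ≤ dotProd x y := Iff.rfl

lemma dot_neg_right (x u : Fin d → ℝ) : dotProd x (-u) = -dotProd x u := by
  rw [dot_comm, dot_neg_left, dot_comm]

/-- For `u` an extreme point of the dual, the exposed set is a facet. -/
lemma facet_of_extreme (hP : IsReflexive P) (hd : 0 < d)
    {u : Fin d → ℝ} (hu : u ∈ Set.extremePoints ℝ (dualPolytope P)) :
    IsFacet P {x ∈ P | dotProd x u = -1} := by
  obtain ⟨huD, huExt⟩ := (mem_extremePoints).1 hu
  obtain ⟨r, hr0, hball⟩ := ball_subset_dual hP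
  -- u ≠ 0
  have hu0 : u ≠ 0 := by
    intro h0
    set p : Fin d → ℝ := Pi.single ⟨0, hd⟩ r with hp
    have hpn : ‖p‖ ≤ r := by
      rw [pi_norm_le_iff_of_nonneg hr0.le]
      intro i
      rw [hp, Pi.single_apply]
      rcases eq_or_ne i ⟨0, hd⟩ with h | h
      · rw [if_pos h, Real.norm_eq_abs, abs_of_pos hr0]
      · rw [if_neg h]; simpa using hr0.le
    have hpD : p ∈ dualPolytope P := hball p hpn
    have hmpD : -p ∈ dualPolytope P := hball (-p) (by rwa [norm_neg])
    have hseg : u ∈ openSegment ℝ p (-p) := by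
      refine ⟨1/2, 1/2, by norm_num, by norm_num, by norm_num, ?_⟩
      rw [h0]
      funext i
      simp
    have := (huExt p hpD (-p) hmpD hseg).1
    rw [← this, hp] at h0
    have := congrFun h0 ⟨0, hd⟩
    simp at this
    exact absurd this (ne_of_gt hr0)
  -- nonempty
  have hne : ({x ∈ P | dotProd x u = -1} : Set (Fin d → ℝ)).Nonempty := by
    by_contra hcon
    rw [Set.not_nonempty_iff_eq_empty] at hcon
    have hgt : ∀ x ∈ P, -1 < dotProd x u := by
      intro x hx
      rcases lt_or_eq_of_le (huD x hx) with h | h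
      · exact h
      · exfalso
        have hmem : x ∈ ({x ∈ P | dotProd x u = -1} : Set (Fin d → ℝ)) := ⟨hx, h.symm⟩
        rw [hcon] at hmem
        exact hmem
    obtain ⟨xm, hxmP, hxm⟩ := (P_compact hP).exists_isMinOn ⟨0, zero_mem_P hP⟩
      (continuous_dot_left u).continuousOn
    set m : ℝ := dotProd xm u with hm
    have hm1 : -1 < m := hgt xm hxmP
    have hm0 : m ≤ 0 := by
      have := hxm (zero_mem_P hP)
      simpa [dot_zero_left] using this
    set ε : ℝ := (1 + m)/2 with hε
    have hε0 : 0 < ε := by rw [hε]; linarith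
    have hε1 : ε ≤ 1 := by rw [hε]; linarith
    have hmin : ∀ x ∈ P, m ≤ dotProd x u := fun x hx => hxm hx
    have hplus : (1 + ε) • u ∈ dualPolytope P := by
      intro x hx
      rw [dot_smul_right]
      have ht := hmin x hx
      rcases le_or_gt 0 (dotProd x u) with h | h
      · nlinarith
      · nlinarith [mul_nonneg (by linarith : (0:ℝ) ≤ 1 + m) (by linarith : (0:ℝ) ≤ m + 2)]
    have hminus : (1 - ε) • u ∈ dualPolytope P := by
      intro x hx
      rw [dot_smul_right]
      have ht := hmin x hx
      rcases le_or_gt 0 (dotProd x u) with h | h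
      · nlinarith
      · nlinarith
    have hseg : u ∈ openSegment ℝ ((1-ε) • u) ((1+ε) • u) := by
      refine ⟨1/2, 1/2, by norm_num, by norm_num, by norm_num, ?_⟩
      rw [smul_smul, smul_smul, ← add_smul]
      have h9 : (1/2 * (1 - ε) + 1/2 * (1 + ε) : ℝ) = 1 := by ring
      rw [h9, one_smul]
    have := (huExt _ hminus _ hplus hseg).1
    have h2 : ε • u = 0 := by
      have h3 : (1 - ε) • u - u = 0 := by rw [this]; simp
      rw [sub_smul, one_smul] at h3
      have h4 : -(ε • u) = 0 := by rw [← h3]; abel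
      simpa using h4
    rcases smul_eq_zero.1 h2 with h2 | h2
    · exact absurd h2 (ne_of_gt hε0)
    · exact hu0 h2
  -- face
  have hface : IsFace P {x ∈ P | dotProd x u = -1} := by
    refine ⟨-u, 1, ?_, ?_⟩
    · intro x hx
      rw [dot_comm, dot_neg_right]
      linarith [huD x hx]
    · ext x
      simp only [Set.mem_setOf_eq]
      constructor
      · rintro ⟨hxP, hxu⟩
        refine ⟨hxP, ?_⟩
        rw [dot_comm, dot_neg_right, hxu]; norm_num
      · rintro ⟨hxP, hxu⟩
        refine ⟨hxP, ?_⟩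
        rw [dot_comm, dot_neg_right] at hxu
        linarith
  -- finrank ≤ d - 1
  have hsub : vectorSpan ℝ ({x ∈ P | dotProd x u = -1} : Set (Fin d → ℝ)) ≤
      LinearMap.ker (dlin u) := by
    rw [vectorSpan_def, Submodule.span_le]
    rintro t ht
    obtain ⟨x, hx, y, hy, rfl⟩ := ht
    simp only [vsub_eq_sub, SetLike.mem_coe, LinearMap.mem_ker, map_sub, dlin_apply]
    rw [hx.2, hy.2]
    ring
  have hle : Module.finrank ℝ (vectorSpan ℝ ({x ∈ P | dotProd x u = -1} : Set (Fin d → ℝ)))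
      ≤ d - 1 :=
    le_trans (Submodule.finrank_mono hsub) (le_of_eq (finrank_ker_dlin hu0))
  -- finrank ≥ d - 1
  have hge : d - 1 ≤
      Module.finrank ℝ (vectorSpan ℝ ({x ∈ P | dotProd x u = -1} : Set (Fin d → ℝ))) := by
    by_contra hcon
    push_neg at hcon
    have hspan : Module.finrank ℝ
        (Submodule.span ℝ ({x ∈ P | dotProd x u = -1} : Set (Fin d → ℝ))) < d := by
      have := span_le_bound hne
      omega
    obtain ⟨y, hy0, hyF⟩ := exists_perp hspan
    obtain ⟨V, hVlat, hPeq⟩ := hP.1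
    have hVne : V.Nonempty := by
      have h0P : (0 : Fin d → ℝ) ∈ P := zero_mem_P hP
      rw [hPeq] at h0P
      have h2 : (V : Set (Fin d → ℝ)).Nonempty := convexHull_nonempty_iff.1 ⟨0, h0P⟩
      exact Finset.coe_nonempty.1 h2
    have hVP : ∀ x ∈ V, x ∈ P := by
      intro x hx
      rw [hPeq]
      exact subset_convexHull ℝ _ hx
    set T : Finset (Fin d → ℝ) := V.filter (fun x => ¬ (dotProd x u = -1)) with hT
    have hTne : T.Nonempty := by
      by_contra hTe
      rw [Finset.not_nonempty_iff_eq_empty] at hTe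
      have hall : ∀ x ∈ V, dotProd x u = -1 := by
        intro x hxV
        by_contra hne'
        have hxt : x ∈ T := by rw [hT]; exact Finset.mem_filter.2 ⟨hxV, hne'⟩
        rw [hTe] at hxt
        exact absurd hxt (Finset.notMem_empty x)
      have h0P : (0 : Fin d → ℝ) ∈ P := zero_mem_P hP
      rw [hPeq] at h0P
      have hconv2 : convexHull ℝ (V : Set (Fin d → ℝ)) ⊆ {x | dotProd x u = -1} :=
        convexHull_min (fun x hxV => hall x hxV) (convex_hyperplane (dot_isLinearMap_left u) (-1))
      have h00 := hconv2 h0P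
      rw [Set.mem_setOf_eq, dot_zero_left] at h00
      norm_num at h00
    have hε0 : 0 < T.inf' hTne (fun x => (dotProd x u + 1) / (|dotProd x y| + 1)) := by
      rw [Finset.lt_inf'_iff]
      intro x hxT
      rw [hT, Finset.mem_filter] at hxT
      have hgt : -1 < dotProd x u := lt_of_le_of_ne (huD x (hVP x hxT.1)) (Ne.symm hxT.2)
      have hpos : (0:ℝ) < |dotProd x y| + 1 := by positivity
      exact div_pos (by linarith) hpos
    set ε : ℝ := T.inf' hTne (fun x => (dotProd x u + 1) / (|dotProd x y| + 1)) with hεdef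
    have hkey : ∀ x ∈ V, -1 ≤ dotProd x (u + ε • y) ∧ -1 ≤ dotProd x (u - ε • y) := by
      intro x hxV
      have hxP := hVP x hxV
      rw [dot_add_right, dot_sub_right, dot_smul_right]
      by_cases h : dotProd x u = -1
      · have hxy0 : dotProd x y = 0 := hyF x ⟨hxP, h⟩
        rw [h, hxy0, mul_zero]
        norm_num
      · have hgt : -1 < dotProd x u := lt_of_le_of_ne (huD x hxP) (Ne.symm h)
        have hεle : ε ≤ (dotProd x u + 1) / (|dotProd x y| + 1) :=
          Finset.inf'_le _ (by rw [hT]; exact Finset.mem_filter.2 ⟨hxV, h⟩)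
        have hpos : (0:ℝ) < |dotProd x y| + 1 := by positivity
        have h5 : ε * (|dotProd x y| + 1) ≤ dotProd x u + 1 := (le_div_iff₀ hpos).1 hεle
        have h6 : ε * |dotProd x y| ≤ dotProd x u + 1 := by nlinarith
        have h7 : -|dotProd x y| ≤ dotProd x y := neg_abs_le _
        have h8 : dotProd x y ≤ |dotProd x y| := le_abs_self _
        constructor <;> nlinarith
    have hplus : u + ε • y ∈ dualPolytope P := by
      intro x hx
      rw [hPeq] at hx
      exact convexHull_min (fun x' hx' => (hkey x' hx').1)
        (convex_halfSpace_ge (dot_isLinearMap_left _) _) hx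
    have hminus : u - ε • y ∈ dualPolytope P := by
      intro x hx
      rw [hPeq] at hx
      exact convexHull_min (fun x' hx' => (hkey x' hx').2)
        (convex_halfSpace_ge (dot_isLinearMap_left _) _) hx
    have hseg : u ∈ openSegment ℝ (u - ε • y) (u + ε • y) := by
      refine ⟨1/2, 1/2, by norm_num, by norm_num, by norm_num, ?_⟩
      module
    have := (huExt _ hminus _ hplus hseg).1
    have h2 : ε • y = 0 := by
      have h3 : (u - ε • y) - u = 0 := by rw [this]; simp
      have h4 : -(ε • y) = 0 := by rw [← h3]; abel
      simpa using h4
    rcases smul_eq_zero.1 h2 with h2 | h2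
    · exact absurd h2 (ne_of_gt hε0)
    · exact hy0 h2
  exact ⟨hface, hne, le_antisymm hle hge⟩

/-- Every facet has a lattice normal realizing it as `{x ∈ P | ⟨x,u⟩ = -1}`. -/
lemma facet_normal (hP : IsReflexive P) (hd : 0 < d) {F : Set (Fin d → ℝ)}
    (hF : IsFacet P F) :
    ∃ u, IsLatticePoint u ∧ (∀ x ∈ P, -1 ≤ dotProd x u) ∧ F = {x ∈ P | dotProd x u = -1} := by
  obtain ⟨⟨u₀, c, hle, hFeq⟩, hFne, hFrank⟩ := hF
  obtain ⟨x₀, hx₀⟩ := hFne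
  -- u₀ ≠ 0
  have hu₀ : u₀ ≠ 0 := by
    intro h0
    rw [h0] at hFeq
    have hc0 : c = 0 := by
      have := hFeq ▸ hx₀
      have h2 := this.2
      rw [dot_zero_left] at h2
      exact h2.symm
    have hFP : F = P := by
      rw [hFeq, hc0]
      ext x
      simp [dot_zero_left]
    rw [hFP] at hFrank
    rw [vectorSpan_P_top hP.2.1] at hFrank
    rw [finrank_top, Module.finrank_fin_fun] at hFrank
    omega
  -- c > 0
  have hc0 : 0 < c := by
    have hcge : 0 ≤ c := by
      have := hle 0 (zero_mem_P hP)
      rwa [dot_comm, dot_zero_left] at this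
    rcases lt_or_eq_of_le hcge with h | h
    · exact h
    · exfalso
      obtain ⟨ε, hε0, hball⟩ := Metric.mem_nhds_iff.1 (mem_interior_iff_mem_nhds.1 hP.2.1)
      have hun : (0:ℝ) < ‖u₀‖ := norm_pos_iff.2 hu₀
      set xx : Fin d → ℝ := ((ε/2) / ‖u₀‖) • u₀ with hxx
      have hxxP : xx ∈ P := by
        apply hball
        rw [Metric.mem_ball, dist_zero_right, hxx, norm_smul, Real.norm_eq_abs,
          abs_of_pos (by positivity), div_mul_cancel₀ _ (ne_of_gt hun)]
        linarith
      have := hle xx hxxP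
      rw [hxx, dot_comm, dot_smul_left, dot_comm] at this
      have hpos : 0 < ((ε/2) / ‖u₀‖) * dotProd u₀ u₀ := by
        apply mul_pos (by positivity) (dot_self_pos hu₀)
      rw [← h] at this
      linarith
  set u : Fin d → ℝ := (-c⁻¹) • u₀ with hu
  have hdotu : ∀ x, dotProd x u = -c⁻¹ * dotProd u₀ x := by
    intro x
    rw [hu, dot_smul_right, dot_comm u₀ x]
  have hPu : ∀ x ∈ P, -1 ≤ dotProd x u := by
    intro x hx
    rw [hdotu]
    have := hle x hx
    have h2 : dotProd u₀ x / c ≤ 1 := (div_le_one hc0).2 this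
    have h3 : -c⁻¹ * dotProd u₀ x = -(dotProd u₀ x / c) := by field_simp
    rw [h3]
    linarith
  have hFu : F = {x ∈ P | dotProd x u = -1} := by
    rw [hFeq]
    ext x
    simp only [Set.mem_setOf_eq]
    constructor
    · rintro ⟨hxP, hxc⟩
      refine ⟨hxP, ?_⟩
      rw [hdotu, hxc]
      field_simp
    · rintro ⟨hxP, hxu⟩
      refine ⟨hxP, ?_⟩
      rw [hdotu] at hxu
      field_simp at hxu
      linarith
  -- u is an extreme point of the dual
  have hx₀u : x₀ ∈ P ∧ dotProd x₀ u = -1 := by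
    have := hFu ▸ hx₀
    exact this
  have hspanF : Submodule.span ℝ F = ⊤ := by
    have hvsub : vectorSpan ℝ F ≤ LinearMap.ker (dlin u) := by
      rw [vectorSpan_def, Submodule.span_le]
      rintro t ht
      obtain ⟨x, hx, y, hy, rfl⟩ := ht
      have hx' := hx
      have hy' := hy
      rw [hFu] at hx' hy'
      simp only [vsub_eq_sub, SetLike.mem_coe, LinearMap.mem_ker, map_sub, dlin_apply]
      rw [hx'.2, hy'.2]
      ring
    have hvle : vectorSpan ℝ F ≤ Submodule.span ℝ F := by
      rw [vectorSpan_def, Submodule.span_le]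
      rintro t ht
      obtain ⟨x, hx, y, hy, rfl⟩ := ht
      simp only [vsub_eq_sub, SetLike.mem_coe]
      exact Submodule.sub_mem _ (Submodule.subset_span hx) (Submodule.subset_span hy)
    have hx₀span : x₀ ∈ Submodule.span ℝ F := Submodule.subset_span hx₀
    have hx₀nv : x₀ ∉ vectorSpan ℝ F := by
      intro hmem
      have := hvsub hmem
      rw [LinearMap.mem_ker, dlin_apply] at this
      rw [hx₀u.2] at this
      norm_num at this
    have hlt : vectorSpan ℝ F < Submodule.span ℝ F :=
      lt_of_le_of_ne hvle (fun heq => hx₀nv (heq ▸ hx₀span))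
    have h1 : d - 1 < Module.finrank ℝ (Submodule.span ℝ F) := by
      rw [← hFrank]
      exact Submodule.finrank_lt_finrank_of_lt hlt
    have h2 : Module.finrank ℝ (Submodule.span ℝ F) ≤ d := by
      have := Submodule.finrank_le (Submodule.span ℝ F)
      rwa [Module.finrank_fin_fun] at this
    apply Submodule.eq_top_of_finrank_eq
    rw [Module.finrank_fin_fun]
    omega
  have hperpzero : ∀ z : Fin d → ℝ, (∀ x ∈ F, dotProd x z = 0) → z = 0 := by
    intro z hz
    have hker : Submodule.span ℝ F ≤ LinearMap.ker (dlin z) := by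
      rw [Submodule.span_le]
      intro x hx
      rw [SetLike.mem_coe, LinearMap.mem_ker, dlin_apply]
      exact hz x hx
    rw [hspanF] at hker
    have : dotProd z z = 0 := by
      have := hker (Submodule.mem_top : z ∈ ⊤)
      rwa [LinearMap.mem_ker, dlin_apply] at this
    by_contra hz0
    exact absurd this (ne_of_gt (dot_self_pos hz0))
  have huExt : u ∈ Set.extremePoints ℝ (dualPolytope P) := by
    rw [mem_extremePoints]
    refine ⟨hPu, ?_⟩
    intro y₁ hy₁ y₂ hy₂ hseg
    obtain ⟨a, b, ha, hb, hab, habe⟩ := hseg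
    have hkey : ∀ x ∈ F, dotProd x y₁ = -1 ∧ dotProd x y₂ = -1 := by
      intro x hx
      have hx' := hx
      rw [hFu] at hx'
      have hxP : x ∈ P := hx'.1
      have hxu : dotProd x u = -1 := hx'.2
      have h1 : -1 ≤ dotProd x y₁ := hy₁ x hxP
      have h2 : -1 ≤ dotProd x y₂ := hy₂ x hxP
      have h3 : a * dotProd x y₁ + b * dotProd x y₂ = -1 := by
        rw [← dot_smul_right, ← dot_smul_right, ← dot_add_right, habe]
        exact hxu
      constructor <;> nlinarith
    constructor
    · have hzz : ∀ x ∈ F, dotProd x (y₁ - u) = 0 := by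
        intro x hx
        have hx' := hx
        rw [hFu] at hx'
        have hxu3 : dotProd x u = -1 := hx'.2
        rw [dot_sub_right, (hkey x hx).1, hxu3]
        ring
      exact sub_eq_zero.1 (hperpzero _ hzz)
    · have hzz : ∀ x ∈ F, dotProd x (y₂ - u) = 0 := by
        intro x hx
        have hx' := hx
        rw [hFu] at hx'
        have hxu3 : dotProd x u = -1 := hx'.2
        rw [dot_sub_right, (hkey x hx).2, hxu3]
        ring
      exact sub_eq_zero.1 (hperpzero _ hzz)
  exact ⟨u, E_lattice hP u huExt, hPu, hFu⟩

end GPR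
namespace GPR

variable {d : ℕ} {P : Set (Fin d → ℝ)} {v w : Fin d → ℝ}

lemma mem_frontier_of (hP : IsReflexive P) {x : Fin d → ℝ} (hx : x ∈ P)
    (hni : x ∉ interior P) : x ∈ frontier P := by
  rw [frontier, (P_closed hP).closure_eq]
  exact ⟨hx, hni⟩

lemma sameFacet_symm {x y : Fin d → ℝ} (h : SameFacet P x y) : SameFacet P y x := by
  obtain ⟨F, hF, h1, h2⟩ := h
  exact ⟨F, hF, h2, h1⟩

lemma ne_zero_of_frontier (hP : IsReflexive P) (hv : v ∈ frontier P) : v ≠ 0 := by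
  intro h
  exact (not_interior_of_frontier hv) (h ▸ hP.2.1)

lemma li_swap (h : LinearIndependent ℝ ![v, w]) : LinearIndependent ℝ ![w, v] := by
  rw [LinearIndependent.pair_iff] at h ⊢
  intro s t hst
  have := h t s (by rw [← hst]; rw [add_comm])
  exact ⟨this.2, this.1⟩

/-- The validity predicate for pairs `(a, b)`. -/
def ValidPair (P : Set (Fin d → ℝ)) (v w : Fin d → ℝ) (p : ℕ × ℕ) : Prop :=
  0 < p.1 ∧ 0 < p.2 ∧ (p.1 : ℝ) • v + (p.2 : ℝ) • w ∈ frontier P ∧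
    SameFacet P v ((p.1 : ℝ) • v + (p.2 : ℝ) • w) ∧
    SameFacet P w ((p.1 : ℝ) • v + (p.2 : ℝ) • w)

lemma validPair_swap {a b : ℕ} (h : ValidPair P v w (a, b)) : ValidPair P w v (b, a) := by
  obtain ⟨h1, h2, h3, h4, h5⟩ := h
  have hcomm : ((b, a).1 : ℝ) • w + ((b, a).2 : ℝ) • v = (a : ℝ) • v + (b : ℝ) • w := by
    simp only []
    rw [add_comm]
  exact ⟨h2, h1, by rw [hcomm]; exact h3, by rw [hcomm]; exact h5, by rw [hcomm]; exact h4⟩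

/-- Part 1: `v + w` lies on the boundary. -/
lemma sum_frontier (hP : IsReflexive P) (hd : 0 < d) (hv : v ∈ frontier P)
    (hw : w ∈ frontier P) (hvL : IsLatticePoint v) (hwL : IsLatticePoint w)
    (hns : ¬ SameFacet P v w) (hnz : v + w ≠ 0) : v + w ∈ frontier P := by
  have hvP : v ∈ P := frontier_sub_P hP hv
  have hwP : w ∈ P := frontier_sub_P hP hw
  have hmem : v + w ∈ P := by
    rw [mem_P_iff hP]
    intro u hu
    obtain ⟨k1, hk1⟩ := dot_int hvL (E_lattice hP u hu)
    obtain ⟨k2, hk2⟩ := dot_int hwL (E_lattice hP u hu)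
    have h1 : (-1 : ℝ) ≤ k1 := by rw [← hk1]; exact E_sub_dual hu v hvP
    have h2 : (-1 : ℝ) ≤ k2 := by rw [← hk2]; exact E_sub_dual hu w hwP
    have h1' : (-1 : ℤ) ≤ k1 := by exact_mod_cast h1
    have h2' : (-1 : ℤ) ≤ k2 := by exact_mod_cast h2
    have hnb : ¬ (k1 = -1 ∧ k2 = -1) := by
      rintro ⟨e1, e2⟩
      apply hns
      refine ⟨{x ∈ P | dotProd x u = -1}, facet_of_extreme hP hd hu, ⟨hvP, ?_⟩, ⟨hwP, ?_⟩⟩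
      · rw [hk1, e1]; norm_num
      · rw [hk2, e2]; norm_num
    have hsum : (-1 : ℤ) ≤ k1 + k2 := by omega
    rw [dot_add_left, hk1, hk2]
    exact_mod_cast hsum
  have hni : v + w ∉ interior P := by
    intro hint
    exact hnz (interior_lattice hP hint (lattice_add hvL hwL))
  exact mem_frontier_of hP hmem hni

/-- Facet-normal data attached to a valid pair. -/
lemma valid_data (hP : IsReflexive P) (hd : 0 < d) (hns : ¬ SameFacet P v w)
    (hvP : v ∈ P) (hwP : w ∈ P) (hvL : IsLatticePoint v) (hwL : IsLatticePoint w)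
    {a b : ℕ} (h : ValidPair P v w (a, b)) :
    ∃ s t : ℤ, 0 ≤ s ∧ 0 ≤ t ∧ (b : ℤ) * s = (a : ℤ) - 1 ∧ (a : ℤ) * t = (b : ℤ) - 1 ∧
      (∃ uG, IsLatticePoint uG ∧ (∀ x ∈ P, -1 ≤ dotProd x uG) ∧ dotProd v uG = -1 ∧
        dotProd w uG = (s : ℝ)) ∧
      (∃ uH, IsLatticePoint uH ∧ (∀ x ∈ P, -1 ≤ dotProd x uH) ∧ dotProd w uH = -1 ∧
        dotProd v uH = (t : ℝ)) := by
  obtain ⟨ha, hb, hzF, hsv, hsw⟩ := h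
  simp only [] at ha hb hzF hsv hsw
  set z : Fin d → ℝ := (a : ℝ) • v + (b : ℝ) • w with hz
  -- facet containing v and z
  obtain ⟨F, hF, hvF, hzFF⟩ := hsv
  obtain ⟨uG, hGlat, hGle, hGeq⟩ := facet_normal hP hd hF
  rw [hGeq] at hvF hzFF
  have hvG : dotProd v uG = -1 := hvF.2
  have hzG : dotProd z uG = -1 := hzFF.2
  obtain ⟨s, hs⟩ := dot_int hwL hGlat
  have hseq : (b : ℝ) * (s : ℝ) = (a : ℝ) - 1 := by
    have : dotProd z uG = (a : ℝ) * dotProd v uG + (b : ℝ) * dotProd w uG := by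
      rw [hz, dot_add_left, dot_smul_left, dot_smul_left]
    rw [hzG, hvG, hs] at this
    linarith
  have hseqZ : (b : ℤ) * s = (a : ℤ) - 1 := by exact_mod_cast hseq
  have hsge : (-1 : ℤ) ≤ s := by
    have := hGle w hwP
    rw [hs] at this
    exact_mod_cast this
  have hsne : s ≠ -1 := by
    intro hsm
    apply hns
    refine ⟨F, hF, by rw [hGeq]; exact hvF, ?_⟩
    rw [hGeq]
    refine ⟨hwP, ?_⟩
    rw [hs, hsm]
    norm_num
  have hs0 : 0 ≤ s := by omega
  -- facet containing w and z
  obtain ⟨F', hF', hwF', hzFF'⟩ := hsw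
  obtain ⟨uH, hHlat, hHle, hHeq⟩ := facet_normal hP hd hF'
  rw [hHeq] at hwF' hzFF'
  have hwH : dotProd w uH = -1 := hwF'.2
  have hzH : dotProd z uH = -1 := hzFF'.2
  obtain ⟨t, ht⟩ := dot_int hvL hHlat
  have hteq : (a : ℝ) * (t : ℝ) = (b : ℝ) - 1 := by
    have : dotProd z uH = (a : ℝ) * dotProd v uH + (b : ℝ) * dotProd w uH := by
      rw [hz, dot_add_left, dot_smul_left, dot_smul_left]
    rw [hzH, hwH, ht] at this
    linarith
  have hteqZ : (a : ℤ) * t = (b : ℤ) - 1 := by exact_mod_cast hteq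
  have htge : (-1 : ℤ) ≤ t := by
    have := hHle v hvP
    rw [ht] at this
    exact_mod_cast this
  have htne : t ≠ -1 := by
    intro htm
    apply hns
    refine ⟨F', hF', ?_, by rw [hHeq]; exact hwF'⟩
    rw [hHeq]
    refine ⟨hvP, ?_⟩
    rw [ht, htm]
    norm_num
  have ht0 : 0 ≤ t := by omega
  exact ⟨s, t, hs0, ht0, hseqZ, hteqZ, ⟨uG, hGlat, hGle, hvG, hs⟩, ⟨uH, hHlat, hHle, hwH, ht⟩⟩

lemma valid_a1_or_b1 (hP : IsReflexive P) (hd : 0 < d) (hns : ¬ SameFacet P v w)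
    (hvP : v ∈ P) (hwP : w ∈ P) (hvL : IsLatticePoint v) (hwL : IsLatticePoint w)
    {a b : ℕ} (h : ValidPair P v w (a, b)) : a = 1 ∨ b = 1 := by
  obtain ⟨s, t, hs0, ht0, hseq, hteq, _, _⟩ := valid_data hP hd hns hvP hwP hvL hwL h
  by_contra hcon
  push_neg at hcon
  have ha2 : 2 ≤ (a : ℤ) := by
    have h1 := h.1
    have h2 := hcon.1
    omega
  have hb2 : 2 ≤ (b : ℤ) := by
    have h1 := h.2.1
    have h2 := hcon.2
    omega
  have hs1 : 1 ≤ s := by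
    rcases eq_or_lt_of_le hs0 with hq | hq
    · exfalso
      rw [← hq, mul_zero] at hseq
      omega
    · omega
  have ht1 : 1 ≤ t := by
    rcases eq_or_lt_of_le ht0 with hq | hq
    · exfalso
      rw [← hq, mul_zero] at hteq
      omega
    · omega
  have h3 : (b : ℤ) ≤ (b : ℤ) * s := le_mul_of_one_le_right (by omega) hs1
  have h4 : (a : ℤ) ≤ (a : ℤ) * t := le_mul_of_one_le_right (by omega) ht1
  linarith

lemma valid_unique_left (hP : IsReflexive P) (hd : 0 < d) (hns : ¬ SameFacet P v w)
    (hvP : v ∈ P) (hwP : w ∈ P) (hvL : IsLatticePoint v) (hwL : IsLatticePoint w)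
    {b a' b' : ℕ} (h1 : ValidPair P v w (1, b)) (h2 : ValidPair P v w (a', b')) :
    a' = 1 ∧ b' ≤ b := by
  obtain ⟨s, t, hs0, ht0, hseq, hteq, ⟨uG, hGlat, hGle, hvG, hwG⟩,
    ⟨uH, hHlat, hHle, hwH, hvH⟩⟩ := valid_data hP hd hns hvP hwP hvL hwL h1
  have hb1 : 1 ≤ (b : ℤ) := by exact_mod_cast h1.2.1
  have hs00 : s = 0 := by
    push_cast at hseq
    rcases mul_eq_zero.1 (by linarith : (b : ℤ) * s = 0) with hh | hh
    · omega
    · exact hh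
  have ht' : t = (b : ℤ) - 1 := by
    push_cast at hteq
    linarith
  have hz'P : (a' : ℝ) • v + (b' : ℝ) • w ∈ P := frontier_sub_P hP h2.2.2.1
  have e1 : dotProd ((a' : ℝ) • v + (b' : ℝ) • w) uG = -(a' : ℝ) := by
    rw [dot_add_left, dot_smul_left, dot_smul_left, hvG, hwG, hs00]
    push_cast
    ring
  have h5 := hGle _ hz'P
  rw [e1] at h5
  have ha'1 : a' = 1 := by
    have h6 := h2.1
    have h7 : (a' : ℝ) ≤ 1 := by linarith
    have h8 : a' ≤ 1 := by exact_mod_cast h7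
    omega
  refine ⟨ha'1, ?_⟩
  have e2 : dotProd ((a' : ℝ) • v + (b' : ℝ) • w) uH = (a' : ℝ) * (t : ℝ) - (b' : ℝ) := by
    rw [dot_add_left, dot_smul_left, dot_smul_left, hvH, hwH]
    ring
  have h7 := hHle _ hz'P
  rw [e2] at h7
  have ht'' : (t : ℝ) = (b : ℝ) - 1 := by exact_mod_cast ht'
  rw [ht'', ha'1] at h7
  have h9 : (b' : ℝ) ≤ (b : ℝ) := by push_cast at h7 ⊢; linarith
  exact_mod_cast h9

lemma xor_facet (hP : IsReflexive P) (hd : 0 < d) (hns : ¬ SameFacet P v w)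
    (hvP : v ∈ P) (hwP : w ∈ P) (hvL : IsLatticePoint v) (hwL : IsLatticePoint w)
    {a b : ℕ} (ha : 0 < a) (hb : 0 < b) {F : Set (Fin d → ℝ)} (hF : IsFacet P F)
    (hzF : (a : ℝ) • v + (b : ℝ) • w ∈ F) : Xor' (v ∈ F) (w ∈ F) := by
  obtain ⟨u, hulat, hule, hFeq⟩ := facet_normal hP hd hF
  have hzF' := hzF
  rw [hFeq] at hzF'
  obtain ⟨k1, hk1⟩ := dot_int hvL hulat
  obtain ⟨k2, hk2⟩ := dot_int hwL hulat
  have h1 : (-1 : ℤ) ≤ k1 := by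
    have := hule v hvP
    rw [hk1] at this
    exact_mod_cast this
  have h2 : (-1 : ℤ) ≤ k2 := by
    have := hule w hwP
    rw [hk2] at this
    exact_mod_cast this
  have heq : (a : ℤ) * k1 + (b : ℤ) * k2 = -1 := by
    have h3 := hzF'.2
    rw [dot_add_left, dot_smul_left, dot_smul_left, hk1, hk2] at h3
    exact_mod_cast h3
  have hnb : ¬ (k1 = -1 ∧ k2 = -1) := by
    rintro ⟨e1, e2⟩
    apply hns
    refine ⟨F, hF, ?_, ?_⟩
    · rw [hFeq]; exact ⟨hvP, by rw [hk1, e1]; norm_num⟩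
    · rw [hFeq]; exact ⟨hwP, by rw [hk2, e2]; norm_num⟩
  have hvmem : v ∈ F ↔ k1 = -1 := by
    rw [hFeq]
    constructor
    · intro hm
      have := hm.2
      rw [hk1] at this
      exact_mod_cast this
    · intro hm
      exact ⟨hvP, by rw [hk1, hm]; norm_num⟩
  have hwmem : w ∈ F ↔ k2 = -1 := by
    rw [hFeq]
    constructor
    · intro hm
      have := hm.2
      rw [hk2] at this
      exact_mod_cast this
    · intro hm
      exact ⟨hwP, by rw [hk2, hm]; norm_num⟩
  have hdisj : k1 = -1 ∨ k2 = -1 := by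
    by_contra hc
    push_neg at hc
    have hk10 : 0 ≤ k1 := by omega
    have hk20 : 0 ≤ k2 := by omega
    have p1 : 0 ≤ (a : ℤ) * k1 := mul_nonneg (by exact_mod_cast Nat.zero_le a) hk10
    have p2 : 0 ≤ (b : ℤ) * k2 := mul_nonneg (by exact_mod_cast Nat.zero_le b) hk20
    linarith
  rcases hdisj with hh | hh
  · left
    refine ⟨hvmem.2 hh, ?_⟩
    rw [hwmem]
    intro hk2m
    exact hnb ⟨hh, hk2m⟩
  · right
    refine ⟨hwmem.2 hh, ?_⟩
    rw [hvmem]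
    intro hk1m
    exact hnb ⟨hk1m, hh⟩

end GPR
namespace GPR

variable {d : ℕ} {P : Set (Fin d → ℝ)} {v w : Fin d → ℝ}

lemma lin_indep (hP : IsReflexive P) (hv : v ∈ frontier P) (hw : w ∈ frontier P)
    (hvL : IsLatticePoint v) (hwL : IsLatticePoint w) (hne : v ≠ w) (hnz : v + w ≠ 0) :
    LinearIndependent ℝ ![v, w] := by
  have hv0 : v ≠ 0 := ne_zero_of_frontier hP hv
  have hw0 : w ≠ 0 := ne_zero_of_frontier hP hw
  have hvP := frontier_sub_P hP hv
  have hwP := frontier_sub_P hP hw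
  obtain ⟨uv, huvE, huv⟩ := frontier_normal hP hv
  obtain ⟨uw, huwE, huw⟩ := frontier_normal hP hw
  rw [LinearIndependent.pair_iff]
  intro s t hst
  by_cases ht : t = 0
  · subst ht
    rw [zero_smul, add_zero] at hst
    rcases smul_eq_zero.1 hst with h | h
    · exact ⟨h, rfl⟩
    · exact absurd h hv0
  · exfalso
    set lam : ℝ := -s / t with hlam
    have hweq : w = lam • v := by
      have h1 : t • w = -s • v := by
        have h2 : t • w = -(s • v) := by
          rw [eq_neg_iff_add_eq_zero, add_comm]
          exact hst
        rw [h2, neg_smul]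
      have h3 := congrArg (fun x => t⁻¹ • x) h1
      simp only [smul_smul, inv_mul_cancel₀ ht, one_smul] at h3
      rw [h3, hlam]
      congr 1
      exact (div_eq_inv_mul _ _).symm
    have hlam0 : lam ≠ 0 := by
      intro h
      rw [h, zero_smul] at hweq
      exact hw0 hweq
    obtain ⟨m, hm⟩ := dot_int hwL (E_lattice hP uv huvE)
    obtain ⟨n, hn⟩ := dot_int hvL (E_lattice hP uw huwE)
    have hmval : (m : ℝ) = -lam := by
      rw [← hm, hweq, dot_smul_left, huv]
      ring
    have hnval : (n : ℝ) = -1 / lam := by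
      have h1 : dotProd w uw = lam * dotProd v uw := by rw [hweq, dot_smul_left]
      rw [huw, hn] at h1
      field_simp
      linarith
    have hmn : m * n = 1 := by
      have : ((m * n : ℤ) : ℝ) = 1 := by
        push_cast
        rw [hmval, hnval]
        field_simp
      exact_mod_cast this
    rcases Int.mul_eq_one_iff_eq_one_or_neg_one.1 hmn with ⟨hm1, _⟩ | ⟨hm1, _⟩
    · -- m = 1 ⇒ lam = -1 ⇒ w = -v ⇒ v + w = 0
      apply hnz
      have : lam = -1 := by
        have := hmval
        rw [hm1] at this
        push_cast at this
        linarith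
      rw [hweq, this]
      funext i
      simp
    · -- m = -1 ⇒ lam = 1 ⇒ w = v
      apply hne
      have : lam = 1 := by
        have := hmval
        rw [hm1] at this
        push_cast at this
        linarith
      rw [hweq, this, one_smul]

lemma exists_valid_asym (hP : IsReflexive P) (hd : 0 < d) (hv : v ∈ frontier P)
    (hw : w ∈ frontier P) (hvL : IsLatticePoint v) (hwL : IsLatticePoint w)
    (hli : LinearIndependent ℝ ![v, w]) (hvwF : v + w ∈ frontier P)
    {u₀ : Fin d → ℝ} (hu₀E : u₀ ∈ Set.extremePoints ℝ (dualPolytope P))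
    (h0 : dotProd v u₀ = 0) (h1 : dotProd w u₀ = -1) :
    ∃ a : ℕ, ValidPair P v w (a, 1) := by
  classical
  have hvP := frontier_sub_P hP hv
  have hwP := frontier_sub_P hP hw
  obtain ⟨uv, huvE, huv⟩ := frontier_normal hP hv
  have hA1 : ((1 : ℕ) : ℝ) • v + w ∈ P := by
    push_cast
    rw [one_smul]
    exact frontier_sub_P hP hvwF
  have hbd : ∀ a : ℕ, ((a : ℝ) • v + w ∈ P) → (a : ℝ) ≤ dotProd w uv + 1 := by
    intro a hmem
    have h2 := E_sub_dual huvE _ hmem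
    rw [dot_add_left, dot_smul_left, huv] at h2
    linarith
  have hleN : ∀ a : ℕ, ((a : ℝ) • v + w ∈ P) → a ≤ Nat.ceil (dotProd w uv + 1) := by
    intro a hmem
    have h2 : (a : ℝ) ≤ (Nat.ceil (dotProd w uv + 1) : ℝ) :=
      le_trans (hbd a hmem) (Nat.le_ceil _)
    exact_mod_cast h2
  set N : ℕ := Nat.ceil (dotProd w uv + 1) with hN
  have h1N : 1 ≤ N := hleN 1 hA1
  set A : ℕ := Nat.findGreatest (fun a : ℕ => (a : ℝ) • v + w ∈ P) N with hA
  have hApos : 1 ≤ A := Nat.le_findGreatest (P := fun a : ℕ => (a : ℝ) • v + w ∈ P) h1N hA1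
  have hAQ : (A : ℝ) • v + w ∈ P :=
    Nat.findGreatest_spec (P := fun a : ℕ => (a : ℝ) • v + w ∈ P) h1N hA1
  have hAnot : ¬ (((A + 1 : ℕ) : ℝ) • v + w ∈ P) := by
    by_cases hle : A + 1 ≤ N
    · exact Nat.findGreatest_is_greatest (P := fun a : ℕ => (a : ℝ) • v + w ∈ P) (by omega) hle
    · intro hmem
      have := hleN (A + 1) hmem
      omega
  set z : Fin d → ℝ := (A : ℝ) • v + w with hz
  have hzlat : IsLatticePoint z := lattice_add (lattice_nsmul hvL A) hwL
  have hzne : z ≠ 0 := by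
    intro hzz
    have h2 := (LinearIndependent.pair_iff.1 hli) (A : ℝ) 1 (by
      rw [one_smul]
      exact hzz)
    exact one_ne_zero h2.2
  have hzF : z ∈ frontier P :=
    mem_frontier_of hP hAQ (fun hint => hzne (interior_lattice hP hint hzlat))
  have hFw : SameFacet P w z := by
    refine ⟨{x ∈ P | dotProd x u₀ = -1}, facet_of_extreme hP hd hu₀E, ⟨hwP, h1⟩, ⟨hAQ, ?_⟩⟩
    rw [hz, dot_add_left, dot_smul_left, h0, h1]
    ring
  have hex : ∃ u₁ ∈ Set.extremePoints ℝ (dualPolytope P),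
      dotProd (((A + 1 : ℕ) : ℝ) • v + w) u₁ < -1 := by
    by_contra hcon
    push_neg at hcon
    exact hAnot ((mem_P_iff hP _).2 hcon)
  obtain ⟨u₁, hu₁E, hu₁lt⟩ := hex
  obtain ⟨k1, hk1⟩ := dot_int hvL (E_lattice hP u₁ hu₁E)
  obtain ⟨k2, hk2⟩ := dot_int hzlat (E_lattice hP u₁ hu₁E)
  have hsplit : ((A + 1 : ℕ) : ℝ) • v + w = v + z := by
    rw [hz]
    push_cast
    rw [add_smul, one_smul]
    abel
  rw [hsplit, dot_add_left, hk1, hk2] at hu₁lt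
  have hk1ge : (-1 : ℤ) ≤ k1 := by
    have := E_sub_dual hu₁E v hvP
    rw [hk1] at this
    exact_mod_cast this
  have hk2ge : (-1 : ℤ) ≤ k2 := by
    have := E_sub_dual hu₁E z hAQ
    rw [hk2] at this
    exact_mod_cast this
  have hsumlt : k1 + k2 < -1 := by exact_mod_cast hu₁lt
  have hk1e : k1 = -1 := by omega
  have hk2e : k2 = -1 := by omega
  have hFv : SameFacet P v z := by
    refine ⟨{x ∈ P | dotProd x u₁ = -1}, facet_of_extreme hP hd hu₁E,
      ⟨hvP, ?_⟩, ⟨hAQ, ?_⟩⟩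
    · rw [hk1, hk1e]; norm_num
    · rw [hk2, hk2e]; norm_num
  refine ⟨A, ⟨hApos, Nat.one_pos, ?_, ?_, ?_⟩⟩
  · show (A : ℝ) • v + ((1 : ℕ) : ℝ) • w ∈ frontier P
    push_cast
    rw [one_smul]
    exact hzF
  · show SameFacet P v ((A : ℝ) • v + ((1 : ℕ) : ℝ) • w)
    push_cast
    rw [one_smul]
    exact hFv
  · show SameFacet P w ((A : ℝ) • v + ((1 : ℕ) : ℝ) • w)
    push_cast
    rw [one_smul]
    exact hFw

lemma exists_valid (hP : IsReflexive P) (hd : 0 < d) (hv : v ∈ frontier P)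
    (hw : w ∈ frontier P) (hvL : IsLatticePoint v) (hwL : IsLatticePoint w)
    (hli : LinearIndependent ℝ ![v, w]) (hvwF : v + w ∈ frontier P) :
    ∃ p : ℕ × ℕ, ValidPair P v w p := by
  have hvP := frontier_sub_P hP hv
  have hwP := frontier_sub_P hP hw
  obtain ⟨u₀, hu₀E, hu₀⟩ := frontier_normal hP hvwF
  obtain ⟨k1, hk1⟩ := dot_int hvL (E_lattice hP u₀ hu₀E)
  obtain ⟨k2, hk2⟩ := dot_int hwL (E_lattice hP u₀ hu₀E)
  have hsum : k1 + k2 = -1 := by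
    have h2 : dotProd (v + w) u₀ = (k1 : ℝ) + k2 := by rw [dot_add_left, hk1, hk2]
    rw [hu₀] at h2
    exact_mod_cast h2.symm
  have hk1ge : (-1 : ℤ) ≤ k1 := by
    have := E_sub_dual hu₀E v hvP
    rw [hk1] at this
    exact_mod_cast this
  have hk2ge : (-1 : ℤ) ≤ k2 := by
    have := E_sub_dual hu₀E w hwP
    rw [hk2] at this
    exact_mod_cast this
  have hcases : (k1 = 0 ∧ k2 = -1) ∨ (k1 = -1 ∧ k2 = 0) := by omega
  rcases hcases with ⟨e1, e2⟩ | ⟨e1, e2⟩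
  · obtain ⟨a, hval⟩ := exists_valid_asym hP hd hv hw hvL hwL hli hvwF hu₀E
      (by rw [hk1, e1]; norm_num) (by rw [hk2, e2]; norm_num)
    exact ⟨(a, 1), hval⟩
  · have hvwF' : w + v ∈ frontier P := by rwa [add_comm]
    obtain ⟨b, hval⟩ := exists_valid_asym hP hd hw hv hwL hvL (li_swap hli) hvwF' hu₀E
      (by rw [hk2, e2]; norm_num) (by rw [hk1, e1]; norm_num)
    exact ⟨(1, b), validPair_swap hval⟩

lemma zbasis (hP : IsReflexive P) (hd : 0 < d) (hns : ¬ SameFacet P v w)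
    (hvP : v ∈ P) (hwP : w ∈ P) (hvL : IsLatticePoint v) (hwL : IsLatticePoint w)
    {a b : ℕ} (hval : ValidPair P v w (a, b)) :
    ∀ z : Fin d → ℝ, IsLatticePoint z → z ∈ Submodule.span ℝ ({v, w} : Set (Fin d → ℝ)) →
      ∃ m n : ℤ, z = (m : ℝ) • v + (n : ℝ) • w := by
  obtain ⟨s, t, hs0, ht0, hseq, hteq, ⟨uG, hGlat, hGle, hvG, hwG⟩,
    ⟨uH, hHlat, hHle, hwH, hvH⟩⟩ := valid_data hP hd hns hvP hwP hvL hwL hval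
  have hab := valid_a1_or_b1 hP hd hns hvP hwP hvL hwL hval
  have hb1 : 1 ≤ (b : ℤ) := by exact_mod_cast hval.2.1
  have ha1 : 1 ≤ (a : ℤ) := by exact_mod_cast hval.1
  have hst : s = 0 ∨ t = 0 := by
    rcases hab with h | h
    · left
      rw [h] at hseq
      push_cast at hseq
      rcases mul_eq_zero.1 (by linarith : (b : ℤ) * s = 0) with hh | hh
      · omega
      · exact hh
    · right
      rw [h] at hteq
      push_cast at hteq
      rcases mul_eq_zero.1 (by linarith : (a : ℤ) * t = 0) with hh | hh
      · omega
      · exact hh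
  intro z hzlat hzspan
  obtain ⟨α, β, hαβ⟩ := Submodule.mem_span_pair.1 hzspan
  obtain ⟨k1, hk1⟩ := dot_int hzlat hGlat
  obtain ⟨k2, hk2⟩ := dot_int hzlat hHlat
  have e1 : -α + β * (s : ℝ) = (k1 : ℝ) := by
    rw [← hk1, ← hαβ, dot_add_left, dot_smul_left, dot_smul_left, hvG, hwG]
    ring
  have e2 : α * (t : ℝ) - β = (k2 : ℝ) := by
    rw [← hk2, ← hαβ, dot_add_left, dot_smul_left, dot_smul_left, hvH, hwH]
    ring
  rcases hst with h | h
  · have hα : α = -(k1 : ℝ) := by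
      rw [h] at e1
      push_cast at e1
      linarith
    have hβ : β = -(k1 : ℝ) * (t : ℝ) - (k2 : ℝ) := by
      rw [hα] at e2
      linarith
    refine ⟨-k1, -k1 * t - k2, ?_⟩
    rw [← hαβ, hα, hβ]
    push_cast
    module
  · have hβ : β = -(k2 : ℝ) := by
      rw [h] at e2
      push_cast at e2
      linarith
    have hα : α = -(k2 : ℝ) * (s : ℝ) - (k1 : ℝ) := by
      rw [hβ] at e1
      linarith
    refine ⟨-k2 * s - k1, -k2, ?_⟩
    rw [← hαβ, hα, hβ]
    push_cast
    module

end GPR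
namespace GPR

variable {d : ℕ} {P : Set (Fin d → ℝ)} {v w : Fin d → ℝ}

lemma seg_count {p q : Fin d → ℝ} (hp : IsLatticePoint p) (hq : IsLatticePoint q)
    (hq0 : q ≠ 0) {m : ℕ} (hm : 0 < m)
    (Hext : ∀ t : ℝ, 0 ≤ t → t ≤ 1 → IsLatticePoint (p + (t * (m : ℝ)) • q) →
      ∃ k : ℕ, k ≤ m ∧ t * (m : ℝ) = (k : ℝ)) :
    {x ∈ segment ℝ p (p + (m : ℝ) • q) | IsLatticePoint x}.ncard = m + 1 := by
  classical
  have hm0 : (m : ℝ) ≠ 0 := by exact_mod_cast hm.ne'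
  have hinj : Function.Injective (fun k : ℕ => p + (k : ℝ) • q) := by
    intro k k' hkk
    simp only [] at hkk
    have h1 : (k : ℝ) • q = (k' : ℝ) • q := by
      have := congrArg (fun x => x - p) hkk
      simpa [add_sub_cancel_left] using this
    have h2 : ((k : ℝ) - (k' : ℝ)) • q = 0 := by
      rw [sub_smul, h1]
      simp
    rcases smul_eq_zero.1 h2 with h | h
    · have : (k : ℝ) = (k' : ℝ) := by linarith [sub_eq_zero.1 h]
      exact_mod_cast this
    · exact absurd h hq0
  have hset : {x ∈ segment ℝ p (p + (m : ℝ) • q) | IsLatticePoint x} =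
      ↑((Finset.range (m + 1)).image (fun k : ℕ => p + (k : ℝ) • q)) := by
    ext x
    simp only [Set.mem_setOf_eq, Finset.coe_image, Set.mem_image, Finset.mem_coe,
      Finset.mem_range]
    constructor
    · rintro ⟨⟨a, b, ha, hb, hab, habe⟩, hlat⟩
      have hxe : x = p + (b * (m : ℝ)) • q := by
        rw [← habe, smul_add, ← add_assoc, ← add_smul, hab, one_smul, smul_smul]
      have hb1 : b ≤ 1 := by linarith
      obtain ⟨k, hkm, hk⟩ := Hext b hb hb1 (by rw [← hxe]; exact hlat)
      refine ⟨k, by omega, ?_⟩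
      rw [hxe, hk]
    · rintro ⟨k, hk, hkeq⟩
      have hkm : (k : ℝ) ≤ (m : ℝ) := by exact_mod_cast Nat.lt_succ_iff.1 hk
      have hkm0 : (0 : ℝ) ≤ (k : ℝ) := by positivity
      constructor
      · refine ⟨1 - (k : ℝ) / m, (k : ℝ) / m, ?_, by positivity, by ring, ?_⟩
        · have : (k : ℝ) / m ≤ 1 := by
            rw [div_le_one (by positivity)]
            exact hkm
          linarith
        · have hmod : (1 - (k : ℝ) / m) • p + ((k : ℝ) / m) • (p + (m : ℝ) • q) =
              p + (((k : ℝ) / m) * m) • q := by module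
          rw [hmod, div_mul_cancel₀ _ hm0]
          rw [← hkeq]
      · rw [← hkeq]
        exact lattice_add hp (lattice_nsmul hq k)
  rw [hset, Set.ncard_coe_finset, Finset.card_image_of_injective _ hinj, Finset.card_range]

lemma coeffs_unique (hli : LinearIndependent ℝ ![v, w]) {c₁ c₂ c₁' c₂' : ℝ}
    (heq : c₁ • v + c₂ • w = c₁' • v + c₂' • w) : c₁ = c₁' ∧ c₂ = c₂' := by
  have h0 : (c₁ - c₁') • v + (c₂ - c₂') • w = 0 := by
    have h1 : (c₁ - c₁') • v + (c₂ - c₂') • w =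
        (c₁ • v + c₂ • w) - (c₁' • v + c₂' • w) := by module
    rw [h1, heq, sub_self]
  have := (LinearIndependent.pair_iff.1 hli) _ _ h0
  constructor
  · linarith [sub_eq_zero.1 (by linarith [this.1] : c₁ - c₁' = 0)]
  · linarith [sub_eq_zero.1 (by linarith [this.2] : c₂ - c₂' = 0)]

lemma w_ne_zero_of_li (hli : LinearIndependent ℝ ![v, w]) : w ≠ 0 := by
  intro h
  have := (LinearIndependent.pair_iff.1 hli) 0 1 (by rw [h, zero_smul, smul_zero, add_zero])
  exact one_ne_zero this.2

/-- Lattice point count on the segment `[v, a•v + b•w]` equals `b + 1`, given `a = 1 ∨ b = 1`. -/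
lemma count_v (hli : LinearIndependent ℝ ![v, w]) (hvL : IsLatticePoint v)
    (hwL : IsLatticePoint w)
    (hzb : ∀ z : Fin d → ℝ, IsLatticePoint z →
      z ∈ Submodule.span ℝ ({v, w} : Set (Fin d → ℝ)) →
      ∃ m n : ℤ, z = (m : ℝ) • v + (n : ℝ) • w)
    {a b : ℕ} (ha : 0 < a) (hb : 0 < b) (hab : a = 1 ∨ b = 1) :
    {x ∈ segment ℝ v ((a : ℝ) • v + (b : ℝ) • w) | IsLatticePoint x}.ncard = b + 1 := by
  have hw0 : w ≠ 0 := w_ne_zero_of_li hli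
  rcases hab with h1 | h1
  · -- a = 1
    subst h1
    have hzeq : ((1 : ℕ) : ℝ) • v + (b : ℝ) • w = v + (b : ℝ) • w := by
      push_cast
      rw [one_smul]
    rw [hzeq]
    apply seg_count hvL hwL hw0 hb
    intro t ht0 ht1 hlat
    have hspan : v + (t * (b : ℝ)) • w ∈ Submodule.span ℝ ({v, w} : Set (Fin d → ℝ)) :=
      Submodule.mem_span_pair.2 ⟨1, t * b, by rw [one_smul]⟩
    obtain ⟨m', n', hmn⟩ := hzb _ hlat hspan
    have hvv : (1 : ℝ) • v + (t * (b : ℝ)) • w = (m' : ℝ) • v + (n' : ℝ) • w := by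
      rw [one_smul, ← hmn]
    obtain ⟨hc1, hc2⟩ := coeffs_unique hli hvv
    have hn'0 : (0 : ℝ) ≤ (n' : ℝ) := by
      rw [← hc2]
      positivity
    have hn'b : (n' : ℝ) ≤ (b : ℝ) := by
      rw [← hc2]
      nlinarith [(Nat.cast_pos (α := ℝ)).2 hb]
    have hn'0' : 0 ≤ n' := by exact_mod_cast hn'0
    refine ⟨n'.toNat, ?_, ?_⟩
    · have : (n' : ℝ) ≤ (b : ℝ) := hn'b
      have h2 : n' ≤ (b : ℤ) := by exact_mod_cast this
      omega
    · rw [hc2]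
      exact_mod_cast (Int.toNat_of_nonneg hn'0').symm
  · -- b = 1
    subst h1
    set q : Fin d → ℝ := ((a - 1 : ℕ) : ℝ) • v + w with hqdef
    have hqlat : IsLatticePoint q := lattice_add (lattice_nsmul hvL _) hwL
    have hq0 : q ≠ 0 := by
      intro h
      rw [hqdef] at h
      have := (LinearIndependent.pair_iff.1 hli) ((a - 1 : ℕ) : ℝ) 1
        (by rw [one_smul]; exact h)
      exact one_ne_zero this.2
    have hzeq : (a : ℝ) • v + ((1 : ℕ) : ℝ) • w = v + ((1 : ℕ) : ℝ) • q := by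
      rw [hqdef]
      push_cast [Nat.cast_sub ha]
      module
    rw [hzeq]
    apply seg_count hvL hqlat hq0 Nat.one_pos
    intro t ht0 ht1 hlat
    have hexp : v + (t * ((1 : ℕ) : ℝ)) • q =
        (1 + t * ((a - 1 : ℕ) : ℝ)) • v + t • w := by
      rw [hqdef]
      push_cast
      module
    have hspan : v + (t * ((1 : ℕ) : ℝ)) • q ∈
        Submodule.span ℝ ({v, w} : Set (Fin d → ℝ)) := by
      rw [hexp]
      exact Submodule.mem_span_pair.2 ⟨_, _, rfl⟩
    obtain ⟨m', n', hmn⟩ := hzb _ hlat hspan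
    rw [hexp] at hmn
    obtain ⟨hc1, hc2⟩ := coeffs_unique hli hmn
    -- hc2 : t = n'
    have hn'0 : 0 ≤ n' := by
      have : (0 : ℝ) ≤ (n' : ℝ) := by rw [← hc2]; exact ht0
      exact_mod_cast this
    have hn'1 : n' ≤ 1 := by
      have : (n' : ℝ) ≤ 1 := by rw [← hc2]; exact ht1
      exact_mod_cast this
    refine ⟨n'.toNat, by omega, ?_⟩
    have ht' : t = (n' : ℝ) := hc2
    rw [ht']
    have hcast : ((n'.toNat : ℕ) : ℝ) = (n' : ℝ) := by exact_mod_cast Int.toNat_of_nonneg hn'0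
    rw [hcast]
    push_cast
    ring

end GPR
open GPR

/-- Generalised primitive relation for a pair of boundary lattice points of a
reflexive polytope not lying in a common facet and not opposite: `v + w ∈ ∂P`, the pair
`{v, w}` is a `ℤ`-basis of `span(v,w) ∩ ℤ^d`, and there is a unique pair `(a,b)` of positive
integers with `z = a•v + b•w ∈ ∂P`, `v ∼ z`, `w ∼ z`; moreover `a = 1` or `b = 1`,
`a = |[w,z] ∩ ℤ^d| - 1`, `b = |[v,z] ∩ ℤ^d| - 1`, and every facet containing `z` contains
exactly one of `v`, `w`. -/
theorem generalized_primitive_relation {d : ℕ} (P : Set (Fin d → ℝ)) (hP : IsReflexive P)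
    (v w : Fin d → ℝ) (hv : v ∈ frontier P) (hw : w ∈ frontier P)
    (hvL : IsLatticePoint v) (hwL : IsLatticePoint w) (hne : v ≠ w)
    (hns : ¬ SameFacet P v w) (hnz : v + w ≠ 0) :
    v + w ∈ frontier P ∧
    (LinearIndependent ℝ ![v, w] ∧
      ∀ z : Fin d → ℝ, IsLatticePoint z →
        z ∈ Submodule.span ℝ ({v, w} : Set (Fin d → ℝ)) →
        ∃ a b : ℤ, z = (a : ℝ) • v + (b : ℝ) • w) ∧
    (∃! p : ℕ × ℕ, 0 < p.1 ∧ 0 < p.2 ∧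
      (p.1 : ℝ) • v + (p.2 : ℝ) • w ∈ frontier P ∧
      SameFacet P v ((p.1 : ℝ) • v + (p.2 : ℝ) • w) ∧
      SameFacet P w ((p.1 : ℝ) • v + (p.2 : ℝ) • w)) ∧
    (∀ a b : ℕ, 0 < a → 0 < b →
      (a : ℝ) • v + (b : ℝ) • w ∈ frontier P →
      SameFacet P v ((a : ℝ) • v + (b : ℝ) • w) →
      SameFacet P w ((a : ℝ) • v + (b : ℝ) • w) →
      (a = 1 ∨ b = 1) ∧
      a + 1 = {x ∈ segment ℝ w ((a : ℝ) • v + (b : ℝ) • w) | IsLatticePoint x}.ncard ∧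
      b + 1 = {x ∈ segment ℝ v ((a : ℝ) • v + (b : ℝ) • w) | IsLatticePoint x}.ncard ∧
      ∀ F, IsFacet P F → (a : ℝ) • v + (b : ℝ) • w ∈ F → Xor' (v ∈ F) (w ∈ F)) := by
  have hd : 0 < d := by
    by_contra hd0
    push_neg at hd0
    have hdeq : d = 0 := by omega
    subst hdeq
    have hv0 : v = 0 := funext fun i => i.elim0
    exact (not_interior_of_frontier hv) (hv0 ▸ hP.2.1)
  have hvP : v ∈ P := frontier_sub_P hP hv
  have hwP : w ∈ P := frontier_sub_P hP hw
  have hvwF : v + w ∈ frontier P := sum_frontier hP hd hv hw hvL hwL hns hnz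
  have hli : LinearIndependent ℝ ![v, w] := lin_indep hP hv hw hvL hwL hne hnz
  obtain ⟨p, hval⟩ := exists_valid hP hd hv hw hvL hwL hli hvwF
  obtain ⟨pa, pb⟩ := p
  have hzb := zbasis hP hd hns hvP hwP hvL hwL hval
  have hns' : ¬ SameFacet P w v := fun hs => hns (sameFacet_symm hs)
  have hzb' : ∀ z : Fin d → ℝ, IsLatticePoint z →
      z ∈ Submodule.span ℝ ({w, v} : Set (Fin d → ℝ)) →
      ∃ m n : ℤ, z = (m : ℝ) • w + (n : ℝ) • v := by
    intro z hl hsp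
    rw [Set.pair_comm] at hsp
    obtain ⟨m, n, hmn⟩ := hzb z hl hsp
    exact ⟨n, m, by rw [hmn, add_comm]⟩
  refine ⟨hvwF, ⟨hli, hzb⟩, ?_, ?_⟩
  · refine ⟨(pa, pb), hval, ?_⟩
    intro q hq
    obtain ⟨qa, qb⟩ := q
    have hqval : ValidPair P v w (qa, qb) := hq
    have hab := valid_a1_or_b1 hP hd hns hvP hwP hvL hwL hval
    rcases hab with h1 | h1
    · subst h1
      obtain ⟨e1, e2⟩ := valid_unique_left hP hd hns hvP hwP hvL hwL hval hqval
      subst e1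
      obtain ⟨_, e3⟩ := valid_unique_left hP hd hns hvP hwP hvL hwL hqval hval
      have heq : qb = pb := le_antisymm e2 e3
      rw [heq]
    · subst h1
      have hvals := validPair_swap hval
      have hqvals := validPair_swap hqval
      obtain ⟨e1, e2⟩ := valid_unique_left hP hd hns' hwP hvP hwL hvL hvals hqvals
      subst e1
      obtain ⟨_, e3⟩ := valid_unique_left hP hd hns' hwP hvP hwL hvL hqvals hvals
      have heq : qa = pa := le_antisymm e2 e3
      rw [heq]
  · intro a b ha hb h3 h4 h5
    have hv2 : ValidPair P v w (a, b) := ⟨ha, hb, h3, h4, h5⟩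
    have hab := valid_a1_or_b1 hP hd hns hvP hwP hvL hwL hv2
    refine ⟨hab, ?_, ?_, ?_⟩
    · have hcount := count_v (li_swap hli) hwL hvL hzb' hb ha hab.symm
      rw [show (a : ℝ) • v + (b : ℝ) • w = (b : ℝ) • w + (a : ℝ) • v from add_comm _ _]
      exact hcount.symm
    · exact (count_v hli hvL hwL hzb ha hb hab).symm
    · intro F hF hzF
      exact xor_facet hP hd hns hvP hwP hvL hwL ha hb hF hzF

end
end

section
/- Every facet (edge) of a two-dimensional reflexive polytope contains at most five lattice points. -/
open scoped BigOperators

noncomputable section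

private lemma dot2 (x y : Fin 2 → ℝ) : dotProd x y = x 0 * y 0 + x 1 * y 1 := by
  simp [dotProd, Fin.sum_univ_two]

private lemma latInt {x : Fin 2 → ℝ} (h : IsLatticePoint x) :
    ∃ a : Fin 2 → ℤ, ∀ i, x i = (a i : ℝ) := by
  choose a ha using h
  exact ⟨a, ha⟩

private lemma dotInt {x y : Fin 2 → ℝ} (hx : IsLatticePoint x) (hy : IsLatticePoint y) :
    ∃ n : ℤ, dotProd x y = (n : ℝ) := by
  obtain ⟨a, ha⟩ := latInt hx
  obtain ⟨b, hb⟩ := latInt hy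
  refine ⟨a 0 * b 0 + a 1 * b 1, ?_⟩
  rw [dot2, ha 0, ha 1, hb 0, hb 1]
  push_cast
  ring

private lemma coordNe {u : Fin 2 → ℝ} (h : u ≠ 0) : u 0 ≠ 0 ∨ u 1 ≠ 0 := by
  by_contra hc
  push_neg at hc
  exact h (funext fun i => by fin_cases i <;> simp [hc.1, hc.2])

private lemma dotSelfPos {u : Fin 2 → ℝ} (h : u ≠ 0) : 0 < dotProd u u := by
  rw [dot2]
  rcases coordNe h with h0 | h0 <;>
    nlinarith [mul_self_pos.mpr h0, mul_self_nonneg (u 0), mul_self_nonneg (u 1)]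

private lemma cramerZero {p q r s v0 v1 : ℝ} (hdet : p * s - q * r ≠ 0)
    (h1 : p * v0 + q * v1 = 0) (h2 : r * v0 + s * v1 = 0) : v0 = 0 ∧ v1 = 0 := by
  constructor
  · have h : v0 * (p * s - q * r) = 0 := by linear_combination s * h1 - q * h2
    exact (mul_eq_zero.mp h).resolve_right hdet
  · have h : v1 * (p * s - q * r) = 0 := by linear_combination -r * h1 + p * h2
    exact (mul_eq_zero.mp h).resolve_right hdet

private lemma detNe {p q r s u0 u1 c : ℝ} (hc : 0 < c) (h1 : u0 * p + u1 * q = c)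
    (h2 : u0 * r + u1 * s = c) (hne : ¬(p = r ∧ q = s)) : p * s - q * r ≠ 0 := by
  intro hdet
  apply hne
  have e0 : c * (p - r) = 0 := by linear_combination u1 * hdet - p * h2 + r * h1
  have e1 : c * (q - s) = 0 := by linear_combination -u0 * hdet - q * h2 + s * h1
  constructor
  · have := (mul_eq_zero.mp e0).resolve_left hc.ne'
    linarith
  · have := (mul_eq_zero.mp e1).resolve_left hc.ne'
    linarith

private lemma intKernel (a b : ℤ) (hab : ¬(a = 0 ∧ b = 0)) :
    ∃ p q : ℤ, p * a + q * b = 0 ∧ ¬(p = 0 ∧ q = 0) ∧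
      ∀ d e : ℤ, d * a + e * b = 0 → ∃ t : ℤ, d = t * p ∧ e = t * q := by
  have hgpos : 0 < Int.gcd a b := by
    rcases Nat.eq_zero_or_pos (Int.gcd a b) with h | h
    · exact absurd ⟨Int.gcd_eq_zero_iff.mp h |>.1, Int.gcd_eq_zero_iff.mp h |>.2⟩ hab
    · exact h
  set G : ℤ := (Int.gcd a b : ℤ) with hG
  have hGne : G ≠ 0 := by rw [hG]; exact_mod_cast hgpos.ne'
  have hda : G ∣ a := Int.gcd_dvd_left a b
  have hdb : G ∣ b := Int.gcd_dvd_right a b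
  set a' : ℤ := a / G with ha'
  set b' : ℤ := b / G with hb'
  have haa : a' * G = a := Int.ediv_mul_cancel hda
  have hbb : b' * G = b := Int.ediv_mul_cancel hdb
  have hcop : Int.gcd a' b' = 1 := Int.gcd_div_gcd_div_gcd hgpos
  refine ⟨-b', a', by linear_combination b' * haa - a' * hbb, ?_, ?_⟩
  · rintro ⟨hp, hq⟩
    have hb0 : b' = 0 := by omega
    exact hab ⟨by rw [← haa, hq]; ring, by rw [← hbb, hb0]; ring⟩
  · intro d e hde
    have h2 : d * a' + e * b' = 0 := by
      have hm : (d * a' + e * b') * G = 0 := by linear_combination d * haa + e * hbb + hde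
      exact (mul_eq_zero.mp hm).resolve_right hGne
    by_cases ha0 : a' = 0
    · have hb1 : b' = 1 ∨ b' = -1 := by
        have : Int.gcd 0 b' = 1 := ha0 ▸ hcop
        simp [Int.gcd] at this
        omega
      have he0 : e = 0 := by
        rcases hb1 with h | h <;> rw [ha0, h] at h2 <;> omega
      refine ⟨-d * b', ?_, by rw [he0, ha0]; ring⟩
      rcases hb1 with h | h <;> rw [h] <;> ring
    · have hcop' : IsCoprime a' b' := Int.isCoprime_iff_gcd_eq_one.mpr hcop
      have hdvd : a' ∣ e := by
        have : a' ∣ e * b' := ⟨-d, by linarith⟩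
        exact hcop'.dvd_of_dvd_mul_right this
      obtain ⟨t, ht⟩ := hdvd
      refine ⟨t, ?_, by rw [ht]; ring⟩
      have : d * a' = (t * -b') * a' := by rw [ht] at h2; linarith [h2]
      exact mul_right_cancel₀ ha0 this

private lemma realKernel (a b p q : ℤ) (hpq : p * a + q * b = 0)
    (hpq0 : ¬(p = 0 ∧ q = 0)) (hab : ¬(a = 0 ∧ b = 0)) (x0 x1 : ℝ)
    (hx : x0 * (a : ℝ) + x1 * (b : ℝ) = 0) : ∃ r : ℝ, x0 = r * p ∧ x1 = r * q := by
  by_cases hb : b = 0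
  · have ha : a ≠ 0 := by tauto
    have haR : (a : ℝ) ≠ 0 := Int.cast_ne_zero.mpr ha
    have hx0 : x0 = 0 := by
      have hbR : (b : ℝ) = 0 := by exact_mod_cast hb
      rw [hbR] at hx
      have : x0 * (a : ℝ) = 0 := by linarith
      exact (mul_eq_zero.mp this).resolve_right haR
    have hp : p = 0 := by
      have : p * a = 0 := by rw [hb] at hpq; linarith
      exact (mul_eq_zero.mp this).resolve_right ha
    have hq : q ≠ 0 := by tauto
    have hqR : (q : ℝ) ≠ 0 := Int.cast_ne_zero.mpr hq
    refine ⟨x1 / q, by rw [hx0, hp]; simp, by field_simp⟩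
  · have hbR : (b : ℝ) ≠ 0 := Int.cast_ne_zero.mpr hb
    have hp : p ≠ 0 := by
      intro h
      have : q * b = 0 := by rw [h] at hpq; linarith
      exact hb ((mul_eq_zero.mp this).resolve_left (by tauto))
    have hpR : (p : ℝ) ≠ 0 := Int.cast_ne_zero.mpr hp
    have hpqR : (p : ℝ) * a + (q : ℝ) * b = 0 := by exact_mod_cast hpq
    refine ⟨x0 / p, by field_simp, ?_⟩
    rw [div_mul_eq_mul_div, eq_div_iff hpR]
    have hcancel : x1 * (p : ℝ) * (b : ℝ) = x0 * (q : ℝ) * (b : ℝ) := by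
      linear_combination (p : ℝ) * hx - x0 * hpqR
    exact mul_right_cancel₀ hbR hcancel

private lemma dotComboR (x z1 z2 : Fin 2 → ℝ) (a b : ℝ) :
    dotProd x (a • z1 + b • z2) = a * dotProd x z1 + b * dotProd x z2 := by
  simp only [dot2, Pi.add_apply, Pi.smul_apply, smul_eq_mul]
  ring

private lemma dotComboL (x1 x2 y : Fin 2 → ℝ) (a b : ℝ) :
    dotProd (a • x1 + b • x2) y = a * dotProd x1 y + b * dotProd x2 y := by
  simp only [dot2, Pi.add_apply, Pi.smul_apply, smul_eq_mul]
  ring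

private lemma convex_halfspace_le' (y : Fin 2 → ℝ) (r : ℝ) :
    Convex ℝ {x : Fin 2 → ℝ | dotProd x y ≤ r} := by
  intro x hx z hz a b ha hb hab
  simp only [Set.mem_setOf_eq, dot2, Pi.add_apply, Pi.smul_apply, smul_eq_mul] at hx hz ⊢
  have h := add_le_add (mul_le_mul_of_nonneg_left hx ha) (mul_le_mul_of_nonneg_left hz hb)
  have hr : a * r + b * r = r := by rw [← add_mul, hab, one_mul]
  nlinarith [h, hr]

private lemma convex_halfspace_ge' (x : Fin 2 → ℝ) (r : ℝ) :
    Convex ℝ {z : Fin 2 → ℝ | r ≤ dotProd x z} := by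
  intro z1 hz1 z2 hz2 a b ha hb hab
  simp only [Set.mem_setOf_eq, dot2, Pi.add_apply, Pi.smul_apply, smul_eq_mul] at hz1 hz2 ⊢
  have h := add_le_add (mul_le_mul_of_nonneg_left hz1 ha) (mul_le_mul_of_nonneg_left hz2 hb)
  have hr : a * r + b * r = r := by rw [← add_mul, hab, one_mul]
  nlinarith [h, hr]

private lemma eqFin2 {x y : Fin 2 → ℝ} (h0 : x 0 = y 0) (h1 : x 1 = y 1) : x = y :=
  funext fun i => by fin_cases i <;> assumption

private lemma exists_small_smul {P : Set (Fin 2 → ℝ)} (h0P : (0 : Fin 2 → ℝ) ∈ interior P)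
    (v : Fin 2 → ℝ) : ∃ δ : ℝ, 0 < δ ∧ δ • v ∈ P := by
  obtain ⟨ε, hε, hball⟩ := Metric.isOpen_iff.mp isOpen_interior 0 h0P
  have hmem : (ε / (2 * (‖v‖ + 1))) • v ∈ Metric.ball (0 : Fin 2 → ℝ) ε := by
    rw [Metric.mem_ball, dist_zero_right, norm_smul, Real.norm_eq_abs,
      abs_of_pos (by positivity)]
    rw [div_mul_eq_mul_div, div_lt_iff₀ (by positivity)]
    nlinarith [norm_nonneg v, hε]
  exact ⟨_, by positivity, interior_subset (hball hmem)⟩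

private lemma reflexive_canonical {P : Set (Fin 2 → ℝ)} (hP : IsReflexive P)
    {x : Fin 2 → ℝ} (hxl : IsLatticePoint x) (hxint : x ∈ interior P) : x = 0 := by
  obtain ⟨⟨V, hV, hPV⟩, h0P, ⟨W, hW, hDW⟩⟩ := hP
  have hPbd : Bornology.IsBounded P := by
    rw [hPV]; exact isBounded_convexHull.mpr V.finite_toSet.isBounded
  obtain ⟨R, hR, hPR⟩ := hPbd.subset_closedBall_lt 0 0
  obtain ⟨εx, hεx, hballx⟩ := Metric.isOpen_iff.mp isOpen_interior x hxint
  have hstep : ∀ z ∈ (W : Set (Fin 2 → ℝ)), 0 ≤ dotProd x z := by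
    intro z hzW
    have hzD : z ∈ dualPolytope P := by
      rw [hDW]; exact subset_convexHull ℝ _ hzW
    by_cases hz0 : z = 0
    · rw [hz0, dot2]
      norm_num
    · have hzz := dotSelfPos hz0
      have hδpos : 0 < εx / (2 * (‖z‖ + 1)) := by positivity
      have hmem : x - (εx / (2 * (‖z‖ + 1))) • z ∈ P := by
        apply interior_subset (hballx ?_)
        rw [Metric.mem_ball, dist_eq_norm]
        have heq : x - (εx / (2 * (‖z‖ + 1))) • z - x = -((εx / (2 * (‖z‖ + 1))) • z) := by
          abel
        rw [heq, norm_neg, norm_smul, Real.norm_eq_abs, abs_of_pos hδpos]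
        rw [div_mul_eq_mul_div, div_lt_iff₀ (by positivity)]
        nlinarith [norm_nonneg z, hεx]
      have h1 := hzD _ hmem
      have h2 : dotProd (x - (εx / (2 * (‖z‖ + 1))) • z) z
          = dotProd x z - (εx / (2 * (‖z‖ + 1))) * dotProd z z := by
        simp only [dot2, Pi.sub_apply, Pi.smul_apply, smul_eq_mul]; ring
      rw [h2] at h1
      obtain ⟨M, hM⟩ := dotInt hxl (hW z hzW)
      have h3 : (-1 : ℝ) < (M : ℝ) := by
        rw [← hM]
        nlinarith
      have h4 : (0:ℤ) ≤ M := by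
        have : (-1:ℤ) < M := by exact_mod_cast h3
        omega
      rw [hM]
      exact_mod_cast h4
  have hallD : ∀ z ∈ dualPolytope P, 0 ≤ dotProd x z := by
    rw [hDW]
    exact fun z hz => convexHull_min hstep (convex_halfspace_ge' x 0) hz
  have hD : (0:ℝ) < 2 * R * (‖x‖ + 1) + 1 := by nlinarith [norm_nonneg x]
  set δ2 : ℝ := 1 / (2 * R * (‖x‖ + 1) + 1) with hδ2def
  have hδ2 : 0 < δ2 := by rw [hδ2def]; exact div_pos one_pos hD
  have hz0D : (fun i => -δ2 * x i) ∈ dualPolytope P := by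
    intro pt hpt
    have hptR : ‖pt‖ ≤ R := by
      have := hPR hpt
      rwa [Metric.mem_closedBall, dist_zero_right] at this
    have hb0 : |pt 0| ≤ R :=
      le_trans (by rw [← Real.norm_eq_abs]; exact norm_le_pi_norm pt 0) hptR
    have hb1 : |pt 1| ≤ R :=
      le_trans (by rw [← Real.norm_eq_abs]; exact norm_le_pi_norm pt 1) hptR
    have hx0 : |x 0| ≤ ‖x‖ := by rw [← Real.norm_eq_abs]; exact norm_le_pi_norm x 0
    have hx1 : |x 1| ≤ ‖x‖ := by rw [← Real.norm_eq_abs]; exact norm_le_pi_norm x 1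
    rw [dot2]
    have hR0 : (0:ℝ) ≤ R := hR.le
    have habs : |pt 0 * x 0 + pt 1 * x 1| ≤ 2 * R * ‖x‖ := by
      have c0 : |pt 0 * x 0| ≤ R * ‖x‖ := by
        rw [abs_mul]
        exact mul_le_mul hb0 hx0 (abs_nonneg _) hR0
      have c1 : |pt 1 * x 1| ≤ R * ‖x‖ := by
        rw [abs_mul]
        exact mul_le_mul hb1 hx1 (abs_nonneg _) hR0
      calc |pt 0 * x 0 + pt 1 * x 1| ≤ |pt 0 * x 0| + |pt 1 * x 1| := abs_add_le _ _
        _ ≤ R * ‖x‖ + R * ‖x‖ := add_le_add c0 c1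
        _ = 2 * R * ‖x‖ := by ring
    have hlt : δ2 * (2 * R * ‖x‖) < 1 := by
      rw [hδ2def, div_mul_eq_mul_div, one_mul, div_lt_one hD]
      nlinarith [norm_nonneg x]
    obtain ⟨ht1, ht2⟩ := abs_le.mp habs
    have hmul := mul_le_mul_of_nonneg_left ht2 hδ2.le
    nlinarith
  have h5 := hallD _ hz0D
  have h6 : dotProd x (fun i => -δ2 * x i) = -δ2 * dotProd x x := by
    simp only [dot2]; ring
  rw [h6] at h5
  by_contra hxne
  have h7 := dotSelfPos hxne
  nlinarith

private lemma facet_lattice_normal {P F : Set (Fin 2 → ℝ)} (hP : IsReflexive P)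
    (hF : IsFacet P F) : ∃ y : Fin 2 → ℝ, IsLatticePoint y ∧ ∀ x ∈ F, dotProd x y = -1 := by
  obtain ⟨⟨V, hV, hPV⟩, h0P, ⟨W, hW, hDW⟩⟩ := hP
  obtain ⟨⟨u, c, huc, hFeq⟩, hFne, hFdim⟩ := hF
  norm_num at hFdim
  have h0P' : (0 : Fin 2 → ℝ) ∈ P := interior_subset h0P
  have hFsubP : F ⊆ P := by rw [hFeq]; exact fun x hx => hx.1
  have hdotu0 : dotProd u 0 = 0 := by simp [dotProd]
  have hc0 : 0 ≤ c := by have := huc 0 h0P'; rw [hdotu0] at this; linarith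
  have hune : u ≠ 0 := by
    intro h
    subst h
    by_cases hc : c = 0
    · have hFP : F = P := by
        rw [hFeq]
        ext x
        simp [dotProd, hc]
      have htop : vectorSpan ℝ P = ⊤ := by
        rw [eq_top_iff]
        rintro v -
        obtain ⟨δ, hδ, hδP⟩ := exists_small_smul h0P v
        have h1 : δ • v - 0 ∈ vectorSpan ℝ P := by
          have := vsub_mem_vectorSpan ℝ hδP h0P'
          simpa [vsub_eq_sub] using this
        rw [sub_zero] at h1
        have h2 := (vectorSpan ℝ P).smul_mem δ⁻¹ h1
        rwa [inv_smul_smul₀ hδ.ne'] at h2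
      rw [hFP, htop, finrank_top, Module.finrank_fin_fun] at hFdim
      exact absurd hFdim (by norm_num)
    · obtain ⟨x0, hx0⟩ := hFne
      rw [hFeq] at hx0
      exact hc (by simpa [dotProd] using hx0.2.symm)
  have hcpos : 0 < c := by
    rcases hc0.lt_or_eq with h | h
    · exact h
    · exfalso
      obtain ⟨δ, hδ, hδP⟩ := exists_small_smul h0P u
      have h1 := huc _ hδP
      have h2 : dotProd u (δ • u) = δ * dotProd u u := by
        simp only [dot2, Pi.smul_apply, smul_eq_mul]; ring
      have h3 := dotSelfPos hune
      rw [h2, ← h] at h1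
      nlinarith
  set y : Fin 2 → ℝ := fun i => -u i / c with hydef
  have hyc : y 0 = -u 0 / c ∧ y 1 = -u 1 / c := ⟨rfl, rfl⟩
  have hyF : ∀ x ∈ F, dotProd x y = -1 := by
    intro x hx
    rw [hFeq] at hx
    have h1 : u 0 * x 0 + u 1 * x 1 = c := by rw [← dot2]; exact hx.2
    have h2 : x 0 * (-u 0 / c) + x 1 * (-u 1 / c) = -((u 0 * x 0 + u 1 * x 1) / c) := by
      field_simp
      ring
    rw [dot2, hyc.1, hyc.2, h2, h1, div_self hcpos.ne']
  have hyD : y ∈ dualPolytope P := by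
    intro x hx
    have h1 : u 0 * x 0 + u 1 * x 1 ≤ c := by rw [← dot2]; exact huc x hx
    have h2 : x 0 * (-u 0 / c) + x 1 * (-u 1 / c) = -((u 0 * x 0 + u 1 * x 1) / c) := by
      field_simp
      ring
    rw [dot2, hyc.1, hyc.2, h2]
    have h3 : (u 0 * x 0 + u 1 * x 1) / c ≤ 1 := by
      rw [div_le_one hcpos]; exact h1
    linarith
  have hx12 : ∃ x1 ∈ F, ∃ x2 ∈ F, x1 ≠ x2 := by
    by_contra h
    push_neg at h
    obtain ⟨x0, hx0⟩ := hFne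
    have hsub : F ⊆ {x0} := fun z hz => Set.mem_singleton_iff.mpr (h z hz x0 hx0)
    have hbot : vectorSpan ℝ F = ⊥ := le_bot_iff.mp (by
      have := vectorSpan_mono ℝ hsub
      rwa [vectorSpan_singleton] at this)
    rw [hbot, finrank_bot] at hFdim
    exact absurd hFdim (by norm_num)
  obtain ⟨x1, hx1F, x2, hx2F, hx12ne⟩ := hx12
  have hcoordne : ¬(x1 0 = x2 0 ∧ x1 1 = x2 1) := by
    rintro ⟨h0, h1⟩
    exact hx12ne (eqFin2 h0 h1)
  have hdotx1 : u 0 * x1 0 + u 1 * x1 1 = c := by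
    rw [← dot2]
    have := hx1F; rw [hFeq] at this; exact this.2
  have hdotx2 : u 0 * x2 0 + u 1 * x2 1 = c := by
    rw [← dot2]
    have := hx2F; rw [hFeq] at this; exact this.2
  have hdet := detNe hcpos hdotx1 hdotx2 hcoordne
  have hyext : y ∈ Set.extremePoints ℝ (dualPolytope P) := by
    refine ⟨hyD, fun z1 hz1 z2 hz2 hseg => ?_⟩
    obtain ⟨a, b, ha, hb, hab, hy'⟩ := hseg
    have key : ∀ x ∈ F, dotProd x z1 = -1 ∧ dotProd x z2 = -1 := by
      intro x hx
      have h1 : -1 ≤ dotProd x z1 := hz1 x (hFsubP hx)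
      have h2 : -1 ≤ dotProd x z2 := hz2 x (hFsubP hx)
      have hsum : a * dotProd x z1 + b * dotProd x z2 = -1 := by
        rw [← dotComboR, hy']; exact hyF x hx
      constructor <;> nlinarith
    obtain ⟨k11, k12⟩ := key x1 hx1F
    obtain ⟨k21, k22⟩ := key x2 hx2F
    have hy1 := hyF x1 hx1F
    have hy2 := hyF x2 hx2F
    rw [dot2] at k11 k12 k21 k22 hy1 hy2
    have hz1y : z1 = y := by
      have e1 : x1 0 * (z1 0 - y 0) + x1 1 * (z1 1 - y 1) = 0 := by
        linear_combination k11 - hy1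
      have e2 : x2 0 * (z1 0 - y 0) + x2 1 * (z1 1 - y 1) = 0 := by
        linear_combination k21 - hy2
      obtain ⟨hv0, hv1⟩ := cramerZero hdet e1 e2
      exact eqFin2 (by linarith) (by linarith)
    have hz2y : z2 = y := by
      have e1 : x1 0 * (z2 0 - y 0) + x1 1 * (z2 1 - y 1) = 0 := by
        linear_combination k12 - hy1
      have e2 : x2 0 * (z2 0 - y 0) + x2 1 * (z2 1 - y 1) = 0 := by
        linear_combination k22 - hy2
      obtain ⟨hv0, hv1⟩ := cramerZero hdet e1 e2
      exact eqFin2 (by linarith) (by linarith)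
    exact hz1y
  rw [hDW] at hyext
  exact ⟨y, hW y (extremePoints_convexHull_subset hyext), hyF⟩

private lemma exists_pos_vertex {P : Set (Fin 2 → ℝ)} (hP : IsReflexive P)
    {y : Fin 2 → ℝ} (hy : y ≠ 0) :
    ∃ T : Fin 2 → ℝ, IsLatticePoint T ∧ T ∈ P ∧ 0 < dotProd T y := by
  obtain ⟨⟨V, hV, hPV⟩, h0P, -⟩ := hP
  have hTex : ∃ Tv ∈ (V : Set (Fin 2 → ℝ)), 0 < dotProd Tv y := by
    by_contra h
    push_neg at h
    have hPle : P ⊆ {x : Fin 2 → ℝ | dotProd x y ≤ 0} := by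
      rw [hPV]
      exact convexHull_min (fun v hv => h v hv) (convex_halfspace_le' y 0)
    obtain ⟨δ, hδ, hδP⟩ := exists_small_smul h0P y
    have h1 := hPle hδP
    have h2 : dotProd (δ • y) y = δ * dotProd y y := by
      simp only [dot2, Pi.smul_apply, smul_eq_mul]; ring
    have h3 := dotSelfPos hy
    simp only [Set.mem_setOf_eq] at h1
    rw [h2] at h1
    nlinarith
  obtain ⟨Tv, hTvV, hTvy⟩ := hTex
  exact ⟨Tv, hV Tv hTvV, by rw [hPV]; exact subset_convexHull ℝ _ hTvV, hTvy⟩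

set_option maxHeartbeats 1000000 in
/-- Every facet of a two-dimensional reflexive polytope contains at most five
lattice points. -/
theorem two_dim_reflexive_facet_lattice_points_le_five (P : Set (Fin 2 → ℝ))
    (hP : IsReflexive P) (F : Set (Fin 2 → ℝ)) (hF : IsFacet P F) :
    {x ∈ F | IsLatticePoint x}.ncard ≤ 5 := by
  by_contra hcon
  push_neg at hcon
  have hP' := hP
  obtain ⟨hPlat, h0P, hDlat⟩ := hP'
  obtain ⟨V, hV, hPV⟩ := hPlat
  have hPconv : Convex ℝ P := hPV ▸ convex_convexHull ℝ _
  have hFsubP : F ⊆ P := by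
    obtain ⟨⟨u, c, huc, hFeq⟩, -, -⟩ := hF
    rw [hFeq]; exact fun x hx => hx.1
  have hFne := hF.2.1
  obtain ⟨y, hylat, hyF⟩ := facet_lattice_normal hP hF
  obtain ⟨n, hn⟩ := latInt hylat
  obtain ⟨xbar, hxbar⟩ := hFne
  have hnne : ¬(n 0 = 0 ∧ n 1 = 0) := by
    rintro ⟨h0, h1⟩
    have := hyF xbar hxbar
    rw [dot2, hn 0, hn 1, h0, h1] at this
    norm_num at this
  have hyne : y ≠ 0 := by
    intro h
    apply hnne
    have h0 : ((n 0 : ℝ)) = 0 := by rw [← hn 0, h]; rfl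
    have h1 : ((n 1 : ℝ)) = 0 := by rw [← hn 1, h]; rfl
    exact ⟨by exact_mod_cast h0, by exact_mod_cast h1⟩
  obtain ⟨p, q, hpq, hpq0, hdiv⟩ := intKernel (n 0) (n 1) hnne
  set w : Fin 2 → ℝ := ![(p : ℝ), (q : ℝ)] with hwdef
  have hw0 : w 0 = (p : ℝ) := rfl
  have hw1 : w 1 = (q : ℝ) := rfl
  have hwlat : IsLatticePoint w := by
    intro i
    fin_cases i
    · exact ⟨p, rfl⟩
    · exact ⟨q, rfl⟩
  set S := {x ∈ F | IsLatticePoint x} with hSdef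
  have hSfin : S.Finite := by
    by_contra h
    rw [Set.Infinite.ncard h] at hcon
    norm_num at hcon
  have hcard : 6 ≤ hSfin.toFinset.card := by
    rw [← Set.ncard_eq_toFinset_card S hSfin]
    omega
  have hTne : hSfin.toFinset.Nonempty := Finset.card_pos.mp (by omega)
  obtain ⟨A0, hA0T⟩ := hTne
  have hA0 : A0 ∈ S := hSfin.mem_toFinset.mp hA0T
  obtain ⟨a0, ha0⟩ := latInt hA0.2
  have hstruct : ∀ x ∈ S, ∃ t : ℤ, ∀ i : Fin 2, x i = A0 i + (t : ℝ) * w i := by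
    intro x hx
    obtain ⟨dx, hdx⟩ := latInt hx.2
    have e1 := hyF x hx.1
    have e2 := hyF A0 hA0.1
    rw [dot2, hn 0, hn 1, hdx 0, hdx 1] at e1
    rw [dot2, hn 0, hn 1, ha0 0, ha0 1] at e2
    have eZ : (dx 0 - a0 0) * n 0 + (dx 1 - a0 1) * n 1 = 0 := by
      have hr : (((dx 0 - a0 0) * n 0 + (dx 1 - a0 1) * n 1 : ℤ) : ℝ) = 0 := by
        push_cast
        linarith
      exact_mod_cast hr
    obtain ⟨t, ht1, ht2⟩ := hdiv _ _ eZ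
    have hc1 : dx 0 = a0 0 + t * p := by linarith
    have hc2 : dx 1 = a0 1 + t * q := by linarith
    refine ⟨t, Fin.forall_fin_two.mpr ⟨?_, ?_⟩⟩
    · rw [hdx 0, ha0 0, hw0]
      exact_mod_cast congrArg (Int.cast : ℤ → ℝ) hc1
    · rw [hdx 1, ha0 1, hw1]
      exact_mod_cast congrArg (Int.cast : ℤ → ℝ) hc2
  choose! f hf using hstruct
  have hinj : Set.InjOn f S := by
    intro a ha b hb hff
    exact eqFin2 (by rw [hf a ha 0, hf b hb 0, hff]) (by rw [hf a ha 1, hf b hb 1, hff])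
  set K := hSfin.toFinset.image f with hKdef
  have hKcard : 6 ≤ K.card := by
    rw [hKdef, Finset.card_image_of_injOn (by rw [Set.Finite.coe_toFinset]; exact hinj)]
    exact hcard
  have hKne : K.Nonempty := Finset.card_pos.mp (by omega)
  have hKIcc : K ⊆ Finset.Icc (K.min' hKne) (K.max' hKne) := fun z hz =>
    Finset.mem_Icc.mpr ⟨K.min'_le z hz, K.le_max' z hz⟩
  have hspread : K.min' hKne + 5 ≤ K.max' hKne := by
    have h1 := Finset.card_le_card hKIcc
    rw [Int.card_Icc] at h1
    omega
  obtain ⟨xA, hxAT, hfA⟩ := Finset.mem_image.mp (K.min'_mem hKne)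
  obtain ⟨xB, hxBT, hfB⟩ := Finset.mem_image.mp (K.max'_mem hKne)
  have hxA : xA ∈ S := hSfin.mem_toFinset.mp hxAT
  have hxB : xB ∈ S := hSfin.mem_toFinset.mp hxBT
  set k : ℤ := f xB - f xA with hkdef
  have hk5 : 5 ≤ k := by rw [hkdef, hfA, hfB]; omega
  have hBA : ∀ i : Fin 2, xB i - xA i = (k : ℝ) * w i := by
    intro i
    rw [hf xB hxB i, hf xA hxA i, hkdef]
    push_cast
    ring
  obtain ⟨Tv, hTvlat, hTvP, hTvy⟩ := exists_pos_vertex hP hyne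
  obtain ⟨N, hN⟩ := dotInt hTvlat hylat
  have hN1 : 1 ≤ N := by
    have h1 : (0:ℝ) < (N : ℝ) := by rw [← hN]; exact hTvy
    have h2 : (0:ℤ) < N := by exact_mod_cast h1
    omega
  set l : ℝ := dotProd Tv y with hldef
  have hl1 : 1 ≤ l := by
    rw [hN]
    exact_mod_cast hN1
  have hl0 : (0:ℝ) < l + 1 := by linarith
  have hdA : dotProd xA y = -1 := hyF xA hxA.1
  have hdB : dotProd xB y = -1 := hyF xB hxB.1
  set Q0 : Fin 2 → ℝ := (l / (l + 1)) • xA + (1 / (l + 1)) • Tv with hQ0def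
  set Q1 : Fin 2 → ℝ := (l / (l + 1)) • xB + (1 / (l + 1)) • Tv with hQ1def
  have hcoef1 : (0:ℝ) ≤ l / (l + 1) := div_nonneg (by linarith) (by linarith)
  have hcoef2 : (0:ℝ) ≤ 1 / (l + 1) := le_of_lt (div_pos one_pos hl0)
  have hcoefsum : l / (l + 1) + 1 / (l + 1) = 1 := by field_simp
  have hQ0P : Q0 ∈ P := hPconv (hFsubP hxA.1) hTvP hcoef1 hcoef2 hcoefsum
  have hQ1P : Q1 ∈ P := hPconv (hFsubP hxB.1) hTvP hcoef1 hcoef2 hcoefsum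
  have hQ0y : dotProd Q0 y = 0 := by
    rw [hQ0def, dotComboL, hdA]
    field_simp
    rw [← hldef]; ring
  have hQ1y : dotProd Q1 y = 0 := by
    rw [hQ1def, dotComboL, hdB]
    field_simp
    rw [← hldef]; ring
  obtain ⟨r0, hr00, hr01⟩ := realKernel (n 0) (n 1) p q hpq hpq0 hnne (Q0 0) (Q0 1) (by
    have h := hQ0y
    rw [dot2, hn 0, hn 1] at h
    exact h)
  obtain ⟨r1, hr10, hr11⟩ := realKernel (n 0) (n 1) p q hpq hpq0 hnne (Q1 0) (Q1 1) (by
    have h := hQ1y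
    rw [dot2, hn 0, hn 1] at h
    exact h)
  have hQd : ∀ i : Fin 2, Q1 i - Q0 i = (l / (l + 1)) * ((k:ℝ) * w i) := by
    intro i
    rw [hQ1def, hQ0def]
    simp only [Pi.add_apply, Pi.smul_apply, smul_eq_mul]
    linear_combination (l / (l + 1)) * hBA i
  have hrdiff : r1 - r0 = l / (l + 1) * (k : ℝ) := by
    have hcases : (p:ℝ) ≠ 0 ∨ (q:ℝ) ≠ 0 := by
      rcases not_and_or.mp hpq0 with h | h
      · exact Or.inl (Int.cast_ne_zero.mpr h)
      · exact Or.inr (Int.cast_ne_zero.mpr h)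
    rcases hcases with h | h
    · have e := hQd 0
      rw [hr10, hr00, hw0] at e
      have e2 : (r1 - r0) * (p:ℝ) = (l / (l + 1) * (k:ℝ)) * (p:ℝ) := by
        linear_combination e
      exact mul_right_cancel₀ h e2
    · have e := hQd 1
      rw [hr11, hr01, hw1] at e
      have e2 : (r1 - r0) * (q:ℝ) = (l / (l + 1) * (k:ℝ)) * (q:ℝ) := by
        linear_combination e
      exact mul_right_cancel₀ h e2
  have hdk : (5:ℝ) ≤ (k:ℝ) := by exact_mod_cast hk5
  have h52 : (5:ℝ)/2 ≤ r1 - r0 := by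
    rw [hrdiff, div_mul_eq_mul_div, le_div_iff₀ hl0]
    nlinarith
  by_cases hr1 : (5:ℝ)/4 ≤ r1
  · have hr1pos : (0:ℝ) < r1 := by linarith
    have hinv1 : 1 / r1 < 1 := by rw [div_lt_one hr1pos]; linarith
    have hcomb := hPconv.combo_interior_self_mem_interior h0P hQ1P
        (by linarith : (0:ℝ) < 1 - 1 / r1)
        (le_of_lt (div_pos one_pos hr1pos)) (by ring)
    have hweq : (1 - 1 / r1) • (0 : Fin 2 → ℝ) + (1 / r1) • Q1 = w := by
      apply eqFin2
      · simp only [Pi.add_apply, Pi.smul_apply, smul_eq_mul, Pi.zero_apply]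
        rw [hr10, hw0]
        field_simp
        ring
      · simp only [Pi.add_apply, Pi.smul_apply, smul_eq_mul, Pi.zero_apply]
        rw [hr11, hw1]
        field_simp
        ring
    rw [hweq] at hcomb
    have hw0eq := reflexive_canonical hP hwlat hcomb
    apply hpq0
    have hp0 : ((p:ℝ)) = 0 := by rw [← hw0, hw0eq]; rfl
    have hq0 : ((q:ℝ)) = 0 := by rw [← hw1, hw0eq]; rfl
    exact ⟨by exact_mod_cast hp0, by exact_mod_cast hq0⟩
  · push_neg at hr1
    have hr0neg : r0 ≤ -(5:ℝ)/4 := by linarith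
    have hnr0 : (0:ℝ) < -r0 := by linarith
    have hinv1 : 1 / (-r0) < 1 := by rw [div_lt_one hnr0]; linarith
    have hwlat' : IsLatticePoint (-w) := by
      intro i
      fin_cases i
      · exact ⟨-p, by push_cast; rfl⟩
      · exact ⟨-q, by push_cast; rfl⟩
    have hcomb := hPconv.combo_interior_self_mem_interior h0P hQ0P
        (by linarith : (0:ℝ) < 1 - 1 / (-r0))
        (le_of_lt (div_pos one_pos hnr0)) (by ring)
    have hweq : (1 - 1 / (-r0)) • (0 : Fin 2 → ℝ) + (1 / (-r0)) • Q0 = -w := by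
      apply eqFin2
      · simp only [Pi.add_apply, Pi.smul_apply, smul_eq_mul, Pi.zero_apply, Pi.neg_apply]
        rw [hr00, hw0]
        field_simp
        ring
        simp [show r0 ≠ 0 by linarith]
      · simp only [Pi.add_apply, Pi.smul_apply, smul_eq_mul, Pi.zero_apply, Pi.neg_apply]
        rw [hr01, hw1]
        field_simp
        ring
        simp [show r0 ≠ 0 by linarith]
    rw [hweq] at hcomb
    have hw0eq := reflexive_canonical hP hwlat' hcomb
    apply hpq0
    have hp0 : (-(p:ℝ)) = 0 := by rw [show -(p:ℝ) = (-w) 0 from rfl, hw0eq]; rfl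
    have hq0 : (-(q:ℝ)) = 0 := by rw [show -(q:ℝ) = (-w) 1 from rfl, hw0eq]; rfl
    constructor
    · exact_mod_cast neg_eq_zero.mp hp0
    · exact_mod_cast neg_eq_zero.mp hq0


end
end
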